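/- Let C = {f ∈ F : φ(f) = f} be algebraically closed of characteristic 0. If M is an irreducible D-module (finite-dimensional over F) whose restriction M↓^1_t to D_t is reducible for some t ≥ 1, then there exists a divisor s > 1 of gcd(t, dim_F M) and an irreducible D_s-module N such that M ≅ D ⊗_{D_s} N as D-modules. -/

import Mathlib

/-- The fixed field `C = {f ∈ F : φ(f) = f}` of a field automorphism `φ`. -/
def fixedSubfield {F : Type*} [Field F] (φ : F ≃+* F) : Subfield F where
  carrier := {f | φ f = f}
  mul_mem' := by intro a b ha hb; simp only [Set.mem_setOf_eq] at *; rw [map_mul, ha, hb]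
  one_mem' := by simp [Set.mem_setOf_eq]
  add_mem' := by intro a b ha hb; simp only [Set.mem_setOf_eq] at *; rw [map_add, ha, hb]
  zero_mem' := by simp [Set.mem_setOf_eq]
  neg_mem' := by intro a ha; simp only [Set.mem_setOf_eq] at *; rw [map_neg, ha]
  inv_mem' := by intro a ha; simp only [Set.mem_setOf_eq] at *; rw [map_inv₀, ha]

/-- A subspace `p` is stable under the (semilinear) action `g`. -/
def DiffStab {F V : Type*} [Field F] [AddCommGroup V] [Module F V]
    (g : V → V) (p : Submodule F V) : Prop :=
  ∀ x ∈ p, g x ∈ p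

namespace IndProof

open Polynomial Module

variable {F : Type*} [Field F]

lemma iter_fixed (φ : F ≃+* F) [IsAlgClosed (fixedSubfield φ)] {t : ℕ} (ht : 0 < t)
    {x : F} (hx : (⇑φ)^[t] x = x) : x ∈ fixedSubfield φ := by
  classical
  set S := fixedSubfield φ with hS
  -- the polynomial ∏ (X - φ^[i] x) has coefficients fixed by φ
  set G : ℕ → F[X] := fun i => X - C ((⇑φ)^[i] x) with hG
  set P : F[X] := ∏ i ∈ Finset.range t, G i with hP
  have hmapG : ∀ i, (G i).map (φ : F →+* F) = G (i + 1) := by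
    intro i
    simp [hG, Polynomial.map_sub, Function.iterate_succ_apply']
  have hmapP : P.map (φ : F →+* F) = P := by
    have h1 : P.map (φ : F →+* F) = ∏ i ∈ Finset.range t, G (i + 1) := by
      rw [hP, Polynomial.map_prod]
      exact Finset.prod_congr rfl fun i _ => hmapG i
    have hGt : G t = G 0 := by simp [hG, hx]
    have h2 : (∏ i ∈ Finset.range t, G (i + 1)) * G 0 = P * G t := by
      rw [hP, ← Finset.prod_range_succ, ← Finset.prod_range_succ' G t]
    rw [hGt] at h2
    have hG0 : G 0 ≠ 0 := by
      simp only [hG, Function.iterate_zero, id_eq]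
      exact Polynomial.X_sub_C_ne_zero x
    rw [h1]
    exact mul_right_cancel₀ hG0 h2
  have hPmonic : P.Monic := Polynomial.monic_prod_of_monic _ _ fun i _ => Polynomial.monic_X_sub_C _
  have hcoeff : ∀ n, P.coeff n ∈ S := by
    intro n
    have := congrArg (fun q => Polynomial.coeff q n) hmapP
    have h : φ (P.coeff n) = P.coeff n := by simpa [Polynomial.coeff_map] using this
    exact h
  -- lift P to S[X]
  have hlifts : P ∈ Polynomial.lifts (algebraMap S F) := by
    rw [Polynomial.lifts_iff_coeff_lifts]
    intro n
    exact ⟨⟨P.coeff n, hcoeff n⟩, rfl⟩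
  obtain ⟨Q, hQmap, _, hQmonic⟩ := Polynomial.lifts_and_degree_eq_and_monic hlifts hPmonic
  have hPx : P.eval x = 0 := by
    rw [hP, Polynomial.eval_prod]
    refine Finset.prod_eq_zero (Finset.mem_range.2 ht) ?_
    simp [hG]
  have hint : IsIntegral S x := by
    refine ⟨Q, hQmonic, ?_⟩
    rw [← Polynomial.eval_map, hQmap]
    exact hPx
  -- minpoly over the algebraically closed S has degree 1
  have hirr := minpoly.irreducible hint
  have hdeg : (minpoly S x).degree = 1 := IsAlgClosed.degree_eq_one_of_irreducible S hirr
  have hmonic := minpoly.monic hint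
  have hform := Polynomial.eq_X_add_C_of_degree_le_one (le_of_eq hdeg)
  have hnd : (minpoly S x).natDegree = 1 := Polynomial.natDegree_eq_of_degree_eq_some hdeg
  have hc1 : (minpoly S x).coeff 1 = 1 := by
    rw [← hnd]; exact hmonic.coeff_natDegree
  rw [hc1, map_one, one_mul] at hform
  have := minpoly.aeval S x
  rw [hform] at this
  simp only [map_add, Polynomial.aeval_X, Polynomial.aeval_C] at this
  have hxeq : x = algebraMap S F (-((minpoly S x).coeff 0)) := by
    rw [RingHom.map_neg]
    exact eq_neg_of_add_eq_zero_left this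
  rw [hxeq]
  exact (-(minpoly S x).coeff 0).2


open Module

structure SLAut (F V : Type*) [Field F] [AddCommGroup V] [Module F V] where
  φ : F ≃+* F
  A : V ≃+ V
  hA : ∀ (f : F) (v : V), A (f • v) = φ f • A v

namespace SLAut

variable {F V : Type*} [Field F] [AddCommGroup V] [Module F V] (D : SLAut F V)

/-- the `i`-th iterate of `A`. -/
def Ai (i : ℕ) : V → V := (⇑D.A)^[i]

lemma Ai_zero_apply (x : V) : D.Ai 0 x = x := rfl

lemma Ai_one (x : V) : D.Ai 1 x = D.A x := rfl

lemma Ai_succ' (i : ℕ) (x : V) : D.Ai (i + 1) x = D.A (D.Ai i x) :=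
  Function.iterate_succ_apply' _ _ _

lemma Ai_succ (i : ℕ) (x : V) : D.Ai (i + 1) x = D.Ai i (D.A x) :=
  Function.iterate_succ_apply _ _ _

lemma Ai_add_apply (i j : ℕ) (x : V) : D.Ai (i + j) x = D.Ai i (D.Ai j x) :=
  Function.iterate_add_apply _ _ _ _

lemma Ai_add (i : ℕ) (x y : V) : D.Ai i (x + y) = D.Ai i x + D.Ai i y := by
  induction i with
  | zero => rfl
  | succ n ih => simp only [Ai_succ', ih, map_add]

lemma Ai_zero (i : ℕ) : D.Ai i 0 = 0 := by
  induction i with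
  | zero => rfl
  | succ n ih => simp only [Ai_succ', ih, map_zero]

lemma Ai_sub (i : ℕ) (x y : V) : D.Ai i (x - y) = D.Ai i x - D.Ai i y := by
  induction i with
  | zero => rfl
  | succ n ih => simp only [Ai_succ', ih, map_sub]

lemma Ai_neg (i : ℕ) (x : V) : D.Ai i (-x) = -(D.Ai i x) := by
  induction i with
  | zero => rfl
  | succ n ih => simp only [Ai_succ', ih, map_neg]

lemma Ai_smul (i : ℕ) (f : F) (v : V) : D.Ai i (f • v) = (⇑D.φ)^[i] f • D.Ai i v := by
  induction i with
  | zero => rfl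
  | succ n ih =>
      simp only [Ai_succ', ih, Function.iterate_succ_apply']
      rw [D.hA]

lemma Ai_injective (i : ℕ) : Function.Injective (D.Ai i) :=
  Function.Injective.iterate D.A.injective i

lemma Ai_surjective (i : ℕ) : Function.Surjective (D.Ai i) :=
  Function.Surjective.iterate D.A.surjective i

lemma phi_iter_surjective (i : ℕ) : Function.Surjective ((⇑D.φ)^[i]) :=
  Function.Surjective.iterate D.φ.surjective i

lemma phi_iter_injective (i : ℕ) : Function.Injective ((⇑D.φ)^[i]) :=
  Function.Injective.iterate D.φ.injective i

lemma phi_symm_iter (i : ℕ) (c : F) : (⇑D.φ)^[i] ((⇑D.φ.symm)^[i] c) = c := by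
  have h : Function.LeftInverse (⇑D.φ) (⇑D.φ.symm) := D.φ.apply_symm_apply
  exact h.iterate i c

lemma phi_iter_symm (i : ℕ) (c : F) : (⇑D.φ.symm)^[i] ((⇑D.φ)^[i] c) = c := by
  have h : Function.LeftInverse (⇑D.φ.symm) (⇑D.φ) := D.φ.symm_apply_apply
  exact h.iterate i c

lemma hA_symm (f : F) (v : V) : D.A.symm (f • v) = D.φ.symm f • D.A.symm v := by
  apply D.A.injective
  rw [D.hA, D.φ.apply_symm_apply, D.A.apply_symm_apply, D.A.apply_symm_apply]

lemma Asymm_Ai_comm (k : ℕ) (v : V) : D.A.symm (D.Ai k v) = D.Ai k (D.A.symm v) := by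
  induction k with
  | zero => rfl
  | succ n ih => rw [Ai_succ', Ai_succ', D.A.symm_apply_apply, ← ih, D.A.apply_symm_apply]

lemma A_Ai_comm (k : ℕ) (v : V) : D.A (D.Ai k v) = D.Ai k (D.A v) := by
  rw [← Ai_succ', Ai_succ]

lemma Ai_sum {ι : Type*} (s : Finset ι) (i : ℕ) (f : ι → V) :
    D.Ai i (∑ j ∈ s, f j) = ∑ j ∈ s, D.Ai i (f j) := by
  classical
  induction s using Finset.induction_on with
  | empty => simp [D.Ai_zero]
  | insert _ _ hne ih => rw [Finset.sum_insert hne, Finset.sum_insert hne, D.Ai_add, ih]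

lemma phi_iter_zero (i : ℕ) : (⇑D.φ)^[i] (0 : F) = 0 := by
  induction i with
  | zero => rfl
  | succ n ih => rw [Function.iterate_succ_apply', ih, map_zero]

lemma phi_iter_one (i : ℕ) : (⇑D.φ)^[i] (1 : F) = 1 := by
  induction i with
  | zero => rfl
  | succ n ih => rw [Function.iterate_succ_apply', ih, map_one]

lemma phi_iter_add (i : ℕ) (a b : F) : (⇑D.φ)^[i] (a + b) = (⇑D.φ)^[i] a + (⇑D.φ)^[i] b := by
  induction i generalizing a b with
  | zero => rfl
  | succ n ih => rw [Function.iterate_succ_apply', Function.iterate_succ_apply',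
      Function.iterate_succ_apply', ih, map_add]

lemma phi_iter_mul (i : ℕ) (a b : F) : (⇑D.φ)^[i] (a * b) = (⇑D.φ)^[i] a * (⇑D.φ)^[i] b := by
  induction i generalizing a b with
  | zero => rfl
  | succ n ih => rw [Function.iterate_succ_apply', Function.iterate_succ_apply',
      Function.iterate_succ_apply', ih, map_mul]

/-- `φ^[t]` as a ring homomorphism. -/
def phiIt (i : ℕ) : F →+* F where
  toFun := (⇑D.φ)^[i]
  map_one' := D.phi_iter_one i
  map_mul' := D.phi_iter_mul i
  map_zero' := D.phi_iter_zero i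
  map_add' := D.phi_iter_add i

lemma phiIt_apply (i : ℕ) (a : F) : D.phiIt i a = (⇑D.φ)^[i] a := rfl

/-- image of a subspace under `A^[i]`; a subspace since `A` is `φ`-semilinear. -/
def Aim (i : ℕ) (p : Submodule F V) : Submodule F V where
  carrier := D.Ai i '' (p : Set V)
  zero_mem' := ⟨0, p.zero_mem, D.Ai_zero i⟩
  add_mem' := by
    rintro a b ⟨x, hx, rfl⟩ ⟨y, hy, rfl⟩
    exact ⟨x + y, p.add_mem hx hy, D.Ai_add i x y⟩
  smul_mem' := by
    rintro c _ ⟨x, hx, rfl⟩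
    obtain ⟨g, rfl⟩ := D.phi_iter_surjective i c
    exact ⟨g • x, p.smul_mem g hx, D.Ai_smul i g x⟩

lemma mem_Aim {i : ℕ} {p : Submodule F V} {x : V} :
    x ∈ D.Aim i p ↔ ∃ y ∈ p, D.Ai i y = x := Iff.rfl

lemma Ai_mem_Aim {i : ℕ} {p : Submodule F V} {y : V} (hy : y ∈ p) : D.Ai i y ∈ D.Aim i p :=
  ⟨y, hy, rfl⟩

lemma Aim_zero (p : Submodule F V) : D.Aim 0 p = p := by
  ext x; exact ⟨fun ⟨y, hy, h⟩ => h ▸ hy, fun h => ⟨x, h, rfl⟩⟩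

lemma Aim_Aim (i j : ℕ) (p : Submodule F V) : D.Aim i (D.Aim j p) = D.Aim (i + j) p := by
  ext x
  constructor
  · rintro ⟨_, ⟨z, hz, rfl⟩, rfl⟩
    exact ⟨z, hz, D.Ai_add_apply i j z⟩
  · rintro ⟨z, hz, rfl⟩
    exact ⟨D.Ai j z, ⟨z, hz, rfl⟩, (D.Ai_add_apply i j z).symm⟩

lemma Aim_mono {i : ℕ} {p q : Submodule F V} (h : p ≤ q) : D.Aim i p ≤ D.Aim i q := by
  rintro _ ⟨x, hx, rfl⟩; exact ⟨x, h hx, rfl⟩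

lemma Aim_bot (i : ℕ) : D.Aim i (⊥ : Submodule F V) = ⊥ := by
  ext x
  simp only [mem_Aim, Submodule.mem_bot]
  constructor
  · rintro ⟨y, rfl, rfl⟩; exact D.Ai_zero i
  · rintro rfl; exact ⟨0, rfl, D.Ai_zero i⟩

lemma Aim_eq_bot_iff {i : ℕ} {p : Submodule F V} : D.Aim i p = ⊥ ↔ p = ⊥ := by
  constructor
  · intro h
    rw [eq_bot_iff]
    intro x hx
    have : D.Ai i x ∈ D.Aim i p := ⟨x, hx, rfl⟩
    rw [h, Submodule.mem_bot] at this
    have := D.Ai_injective i (this.trans (D.Ai_zero i).symm)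
    simpa using this
  · rintro rfl; exact D.Aim_bot i

lemma Aim_sup (i : ℕ) (p q : Submodule F V) :
    D.Aim i (p ⊔ q) = D.Aim i p ⊔ D.Aim i q := by
  apply le_antisymm
  · rintro _ ⟨x, hx, rfl⟩
    obtain ⟨a, ha, b, hb, rfl⟩ := Submodule.mem_sup.1 hx
    rw [D.Ai_add]
    exact Submodule.add_mem _ (Submodule.mem_sup_left ⟨a, ha, rfl⟩)
      (Submodule.mem_sup_right ⟨b, hb, rfl⟩)
  · exact sup_le (D.Aim_mono le_sup_left) (D.Aim_mono le_sup_right)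

/-- preimage of a subspace under `A^[i]`. -/
def Apre (i : ℕ) (q : Submodule F V) : Submodule F V where
  carrier := D.Ai i ⁻¹' (q : Set V)
  zero_mem' := by simp only [Set.mem_preimage, SetLike.mem_coe, D.Ai_zero i]; exact q.zero_mem
  add_mem' := by
    intro a b ha hb
    simp only [Set.mem_preimage, SetLike.mem_coe, D.Ai_add] at *
    exact q.add_mem ha hb
  smul_mem' := by
    intro c x hx
    simp only [Set.mem_preimage, SetLike.mem_coe, D.Ai_smul] at *
    exact q.smul_mem _ hx

lemma mem_Apre {i : ℕ} {q : Submodule F V} {x : V} : x ∈ D.Apre i q ↔ D.Ai i x ∈ q := Iff.rfl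

lemma Aim_Apre (i : ℕ) (q : Submodule F V) : D.Aim i (D.Apre i q) = q := by
  apply le_antisymm
  · rintro _ ⟨x, hx, rfl⟩; exact hx
  · intro x hx
    obtain ⟨y, rfl⟩ := D.Ai_surjective i x
    exact ⟨y, hx, rfl⟩

lemma Apre_le {i : ℕ} {q p : Submodule F V} (h : q ≤ D.Aim i p) : D.Apre i q ≤ p := by
  intro x hx
  obtain ⟨y, hy, hxy⟩ := h hx
  rwa [← D.Ai_injective i hxy]

lemma Apre_ne_bot {i : ℕ} {q : Submodule F V} (h : q ≠ ⊥) : D.Apre i q ≠ ⊥ := by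
  intro hc
  apply h
  rw [← D.Aim_Apre i q, hc, D.Aim_bot]

/-- stability of a subspace under `A^[k]`. -/
def St (k : ℕ) (p : Submodule F V) : Prop := ∀ x ∈ p, D.Ai k x ∈ p

lemma St_iff_Aim_le {k : ℕ} {p : Submodule F V} : D.St k p ↔ D.Aim k p ≤ p := by
  constructor
  · rintro h _ ⟨x, hx, rfl⟩; exact h x hx
  · intro h x hx; exact h ⟨x, hx, rfl⟩

lemma St.bot (k : ℕ) : D.St k (⊥ : Submodule F V) := by
  intro x hx
  rw [Submodule.mem_bot] at *
  rw [hx, D.Ai_zero]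

lemma St.inf {k : ℕ} {p q : Submodule F V} (hp : D.St k p) (hq : D.St k q) :
    D.St k (p ⊓ q) := fun x hx => ⟨hp x hx.1, hq x hx.2⟩

lemma St.sup {k : ℕ} {p q : Submodule F V} (hp : D.St k p) (hq : D.St k q) :
    D.St k (p ⊔ q) := by
  intro x hx
  obtain ⟨a, ha, b, hb, rfl⟩ := Submodule.mem_sup.1 hx
  rw [D.Ai_add]
  exact Submodule.add_mem _ (Submodule.mem_sup_left (hp a ha)) (Submodule.mem_sup_right (hq b hb))

lemma St.Aim {k i : ℕ} {p : Submodule F V} (hp : D.St k p) : D.St k (D.Aim i p) := by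
  rintro _ ⟨x, hx, rfl⟩
  refine ⟨D.Ai k x, hp x hx, ?_⟩
  rw [← D.Ai_add_apply, ← D.Ai_add_apply, Nat.add_comm]

lemma St.Apre {k i : ℕ} {q : Submodule F V} (hq : D.St k q) : D.St k (D.Apre i q) := by
  intro x hx
  rw [mem_Apre] at *
  rw [← D.Ai_add_apply, Nat.add_comm, D.Ai_add_apply]
  exact hq _ hx

/-- `A^[i]` of a subspace has the same dimension. -/
lemma coe_sum'' {ι : Type*} (p : Submodule F V) (s : Finset ι) (f : ι → p) :
    ((∑ j ∈ s, f j : p) : V) = ∑ j ∈ s, ((f j : V)) := by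
  classical
  induction s using Finset.induction_on with
  | empty => rfl
  | insert _ _ hne ih => rw [Finset.sum_insert hne, Finset.sum_insert hne, Submodule.coe_add, ih]

lemma finrank_Aim [FiniteDimensional F V] (i : ℕ) (p : Submodule F V) :
    finrank F (D.Aim i p) = finrank F p := by
  classical
  set n := finrank F p with hn
  let b : Basis (Fin n) F p := finBasis F p
  let v : Fin n → D.Aim i p := fun j => ⟨D.Ai i (b j : V), ⟨(b j : V), (b j).2, rfl⟩⟩
  have hli : LinearIndependent F v := by
    rw [linearIndependent_iff']
    intro s g hg j hj
    have hg' : ∑ k ∈ s, g k • D.Ai i (b k : V) = 0 := by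
      calc ∑ k ∈ s, g k • D.Ai i (b k : V)
          = ∑ k ∈ s, ((g k • v k : D.Aim i p) : V) := Finset.sum_congr rfl fun k _ => rfl
        _ = 0 := by rw [← coe_sum'', hg]; rfl
    have h2 : ∑ k ∈ s, g k • D.Ai i (b k : V) =
        D.Ai i (∑ k ∈ s, (⇑D.φ.symm)^[i] (g k) • (b k : V)) := by
      rw [D.Ai_sum]
      refine Finset.sum_congr rfl fun k _ => ?_
      rw [D.Ai_smul, D.phi_symm_iter]
    rw [h2] at hg'
    have h3 : ∑ k ∈ s, (⇑D.φ.symm)^[i] (g k) • (b k : V) = 0 := by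
      apply D.Ai_injective i
      rw [hg', D.Ai_zero]
    have h4 : (∑ k ∈ s, (⇑D.φ.symm)^[i] (g k) • b k : p) = 0 := by
      apply Subtype.ext
      rw [coe_sum'']
      simpa using h3
    have h5 := linearIndependent_iff'.1 b.linearIndependent s
      (fun k => (⇑D.φ.symm)^[i] (g k)) h4 j hj
    have h5' : (⇑D.φ.symm)^[i] (g j) = 0 := h5
    have h6 : g j = (⇑D.φ)^[i] ((⇑D.φ.symm)^[i] (g j)) := (D.phi_symm_iter i (g j)).symm
    rw [h6, h5', D.phi_iter_zero]
  have hsp : ⊤ ≤ Submodule.span F (Set.range v) := by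
    rintro ⟨x, hx⟩ -
    obtain ⟨y, hy, rfl⟩ := hx
    have hval : y = ∑ j, b.repr ⟨y, hy⟩ j • (b j : V) := by
      calc y = ((⟨y, hy⟩ : p) : V) := rfl
        _ = ((∑ j, b.repr ⟨y, hy⟩ j • b j : p) : V) := by rw [b.sum_repr]
        _ = ∑ j, ((b.repr ⟨y, hy⟩ j • b j : p) : V) := coe_sum'' p _ _
        _ = ∑ j, b.repr ⟨y, hy⟩ j • (b j : V) := Finset.sum_congr rfl fun j _ => rfl
    have hkey : (⟨D.Ai i y, ⟨y, hy, rfl⟩⟩ : D.Aim i p)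
        = ∑ j, ((⇑D.φ)^[i] (b.repr ⟨y, hy⟩ j)) • v j := by
      apply Subtype.ext
      rw [coe_sum'']
      show D.Ai i y = _
      conv_lhs => rw [hval]
      rw [D.Ai_sum]
      exact Finset.sum_congr rfl fun j _ => by rw [D.Ai_smul]; rfl
    rw [hkey]
    exact Submodule.sum_mem _ fun j _ => Submodule.smul_mem _ _
      (Submodule.subset_span ⟨j, rfl⟩)
  have := finrank_eq_card_basis (Basis.mk hli hsp)
  rw [this, Fintype.card_fin]

end SLAut

variable {F V : Type*} [Field F] [AddCommGroup V] [Module F V]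

/-- partial suprema of a sequence of submodules. -/
def Wseq (f : ℕ → Submodule F V) : ℕ → Submodule F V
  | 0 => ⊥
  | (m + 1) => Wseq f m ⊔ f m

lemma le_Wseq (f : ℕ → Submodule F V) {l m : ℕ} (h : l < m) : f l ≤ Wseq f m := by
  induction m with
  | zero => omega
  | succ k ih =>
      rcases Nat.lt_succ_iff_lt_or_eq.1 h with h' | h'
      · exact le_trans (ih h') le_sup_left
      · subst h'; exact le_sup_right

lemma Wseq_le {f : ℕ → Submodule F V} {m : ℕ} {T : Submodule F V}
    (h : ∀ l < m, f l ≤ T) : Wseq f m ≤ T := by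
  induction m with
  | zero => exact bot_le
  | succ k ih =>
      exact sup_le (ih fun l hl => h l (Nat.lt_succ_of_lt hl)) (h k (Nat.lt_succ_self k))

lemma Wseq_mono {f g : ℕ → Submodule F V} {m : ℕ} (h : ∀ l < m, f l ≤ g l) :
    Wseq f m ≤ Wseq g m :=
  Wseq_le fun l hl => le_trans (h l hl) (le_Wseq g hl)

lemma Wseq_congr {f g : ℕ → Submodule F V} {m : ℕ} (h : ∀ l < m, f l = g l) :
    Wseq f m = Wseq g m :=
  le_antisymm (Wseq_mono fun l hl => le_of_eq (h l hl))
    (Wseq_mono fun l hl => le_of_eq (h l hl).symm)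

lemma mem_Wseq {f : ℕ → Submodule F V} {m : ℕ} {x : V} :
    x ∈ Wseq f m ↔ ∃ y : ℕ → V, (∀ l < m, y l ∈ f l) ∧ x = ∑ l ∈ Finset.range m, y l := by
  classical
  induction m generalizing x with
  | zero =>
      simp only [Wseq, Submodule.mem_bot]
      constructor
      · rintro rfl; exact ⟨fun _ => 0, by omega, by simp⟩
      · rintro ⟨y, -, rfl⟩; simp
  | succ k ih =>
      constructor
      · intro hx
        obtain ⟨a, ha, c, hc, rfl⟩ := Submodule.mem_sup.1 hx
        obtain ⟨y, hy, rfl⟩ := ih.1 ha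
        refine ⟨fun l => if l = k then c else y l, ?_, ?_⟩
        · intro l hl
          by_cases h' : l = k
          · subst h'; simpa using hc
          · simpa [h'] using hy l (by omega)
        · rw [Finset.sum_range_succ, if_pos rfl]
          congr 1
          exact Finset.sum_congr rfl fun l hl => by
            rw [if_neg (by simpa using Finset.mem_range.1 hl |>.ne)]
      · rintro ⟨y, hy, rfl⟩
        rw [Finset.sum_range_succ]
        exact Submodule.add_mem _
          (Submodule.mem_sup_left (ih.2 ⟨y, fun l hl => hy l (by omega), rfl⟩))
          (Submodule.mem_sup_right (hy k (Nat.lt_succ_self k)))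

lemma Aim_Wseq (D : SLAut F V) (i : ℕ) (f : ℕ → Submodule F V) (m : ℕ) :
    D.Aim i (Wseq f m) = Wseq (fun l => D.Aim i (f l)) m := by
  induction m with
  | zero => exact D.Aim_bot i
  | succ k ih => rw [Wseq, Wseq, D.Aim_sup, ih]

lemma St_Wseq {D : SLAut F V} {k m : ℕ} {f : ℕ → Submodule F V}
    (h : ∀ l < m, D.St k (f l)) : D.St k (Wseq f m) := by
  rw [D.St_iff_Aim_le, Aim_Wseq]
  exact Wseq_mono fun l hl => D.St_iff_Aim_le.1 (h l hl)

namespace SLAut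

variable {F V : Type*} [Field F] [AddCommGroup V] [Module F V] (D : SLAut F V)

/-- `p` is a simple `Dₜ`-submodule. -/
def Simp (t : ℕ) (p : Submodule F V) : Prop :=
  p ≠ ⊥ ∧ D.St t p ∧ ∀ q ≤ p, D.St t q → q ≠ ⊥ → q = p

lemma exists_simp_le [FiniteDimensional F V] {t : ℕ} :
    ∀ (n : ℕ) (p : Submodule F V), finrank F p ≤ n → p ≠ ⊥ → D.St t p →
      ∃ q ≤ p, D.Simp t q := by
  intro n
  induction n with
  | zero =>
      intro p hfr hbot _
      exfalso
      exact hbot (Submodule.finrank_eq_zero.1 (Nat.le_zero.1 hfr))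
  | succ n ih =>
      intro p hfr hbot hst
      by_cases hmin : ∀ q ≤ p, D.St t q → q ≠ ⊥ → q = p
      · exact ⟨p, le_rfl, hbot, hst, hmin⟩
      · push_neg at hmin
        obtain ⟨q, hqle, hqst, hqbot, hqne⟩ := hmin
        have hlt : q < p := lt_of_le_of_ne hqle hqne
        have : finrank F q < finrank F p := Submodule.finrank_lt_finrank_of_lt hlt
        obtain ⟨r, hrle, hr⟩ := ih q (by omega) hqbot hqst
        exact ⟨r, le_trans hrle hqle, hr⟩

lemma simp_exists [FiniteDimensional F V] {t : ℕ} {p : Submodule F V}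
    (hbot : p ≠ ⊥) (hst : D.St t p) : ∃ q ≤ p, D.Simp t q :=
  D.exists_simp_le (finrank F p) p le_rfl hbot hst

/-- commutation of a linear map with (the restriction of) `A^[t]`. -/
def Comm (t : ℕ) (p : Submodule F V) (f : ↥p →ₗ[F] V) : Prop :=
  ∀ (x y : ↥p), (y : V) = D.Ai t (x : V) → f y = D.Ai t (f x)

/-- isomorphism of `Dₜ`-submodules. -/
def MIso (t : ℕ) (p q : Submodule F V) : Prop :=
  ∃ f : ↥p →ₗ[F] V, D.Comm t p f ∧ Function.Injective ⇑f ∧ LinearMap.range f = q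

lemma MIso.refl (t : ℕ) (p : Submodule F V) : D.MIso t p p := by
  refine ⟨p.subtype, ?_, p.injective_subtype, Submodule.range_subtype p⟩
  intro x y hxy
  exact hxy

lemma range_st {t : ℕ} {p : Submodule F V} {f : ↥p →ₗ[F] V} (hp : D.St t p)
    (hf : D.Comm t p f) : D.St t (LinearMap.range f) := by
  rintro _ ⟨x, rfl⟩
  exact ⟨⟨D.Ai t (x : V), hp _ x.2⟩, hf x ⟨D.Ai t (x : V), hp _ x.2⟩ rfl⟩

lemma MIso.ne_bot {t : ℕ} {p q : Submodule F V} (hp : p ≠ ⊥) (h : D.MIso t p q) : q ≠ ⊥ := by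
  obtain ⟨f, -, hinj, hrange⟩ := h
  obtain ⟨x, hx, hxne⟩ := Submodule.exists_mem_ne_zero_of_ne_bot hp
  intro hc
  have : f ⟨x, hx⟩ ∈ q := hrange ▸ LinearMap.mem_range_self f ⟨x, hx⟩
  rw [hc, Submodule.mem_bot] at this
  apply hxne
  have : (⟨x, hx⟩ : p) = 0 := hinj (by rw [this, map_zero])
  simpa using congrArg (Subtype.val) this

lemma MIso.trans {t : ℕ} {p q r : Submodule F V} (hp : D.St t p)
    (h1 : D.MIso t p q) (h2 : D.MIso t q r) : D.MIso t p r := by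
  obtain ⟨f, hfc, hfi, hfr⟩ := h1
  obtain ⟨g, hgc, hgi, hgr⟩ := h2
  have hmem : ∀ x : p, f x ∈ q := fun x => hfr ▸ LinearMap.mem_range_self f x
  let f' : ↥p →ₗ[F] ↥q := f.codRestrict q hmem
  refine ⟨g.comp f', ?_, ?_, ?_⟩
  · intro x y hxy
    have h1' : f y = D.Ai t (f x) := hfc x y hxy
    exact hgc (f' x) (f' y) h1'
  · intro a b hab
    exact hfi (congrArg Subtype.val (hgi hab))
  · have hsurj : Function.Surjective ⇑f' := by
      rintro ⟨z, hz⟩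
      rw [← hfr] at hz
      obtain ⟨x, hx⟩ := hz
      exact ⟨x, Subtype.ext hx⟩
    rw [← hgr]
    apply le_antisymm
    · rintro _ ⟨x, rfl⟩; exact ⟨f' x, rfl⟩
    · rintro _ ⟨z, rfl⟩
      obtain ⟨x, rfl⟩ := hsurj z
      exact ⟨x, rfl⟩

lemma MIso.symm {t : ℕ} {p q : Submodule F V} (hp : D.St t p)
    (h : D.MIso t p q) : D.MIso t q p := by
  obtain ⟨f, hfc, hfi, hfr⟩ := h
  have hmem : ∀ x : p, f x ∈ q := fun x => hfr ▸ LinearMap.mem_range_self f x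
  let f' : ↥p →ₗ[F] ↥q := f.codRestrict q hmem
  have hbij : Function.Bijective ⇑f' := by
    constructor
    · intro a b hab
      exact hfi (congrArg Subtype.val hab)
    · rintro ⟨z, hz⟩
      rw [← hfr] at hz
      obtain ⟨x, hx⟩ := hz
      exact ⟨x, Subtype.ext hx⟩
  let e : ↥p ≃ₗ[F] ↥q := LinearEquiv.ofBijective f' hbij
  refine ⟨p.subtype.comp e.symm.toLinearMap, ?_, ?_, ?_⟩
  · intro x y hxy
    set a := e.symm x with ha
    have hax : f a = (x : V) := by
      have : (e a : V) = f a := rfl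
      rw [ha, e.apply_symm_apply] at this
      exact this.symm
    have hmem' : D.Ai t (a : V) ∈ p := hp _ a.2
    have hcomm := hfc a ⟨D.Ai t (a : V), hmem'⟩ rfl
    have : e ⟨D.Ai t (a : V), hmem'⟩ = y := by
      apply Subtype.ext
      show f ⟨D.Ai t (a : V), hmem'⟩ = (y : V)
      rw [hcomm, hax]
      exact hxy.symm
    have h2 : e.symm y = ⟨D.Ai t (a : V), hmem'⟩ := by rw [← this, e.symm_apply_apply]
    show (e.symm y : V) = D.Ai t ((e.symm x : V))
    rw [h2, ← ha]
  · intro a b hab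
    exact e.symm.injective (Subtype.ext hab)
  · apply le_antisymm
    · rintro _ ⟨x, rfl⟩
      exact (e.symm x).2
    · intro z hz
      exact ⟨e ⟨z, hz⟩, by simp [e.symm_apply_apply]⟩

lemma mem_Aim1 {p : Submodule F V} {x : V} (hx : x ∈ D.Aim 1 p) : D.A.symm x ∈ p := by
  obtain ⟨y, hy, rfl⟩ := hx
  rwa [D.Ai_one, D.A.symm_apply_apply]

/-- `A⁻¹` as a map `Aim 1 p → p`. -/
def preA (p : Submodule F V) (x : ↥(D.Aim 1 p)) : ↥p := ⟨D.A.symm (x : V), D.mem_Aim1 x.2⟩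

lemma preA_val (p : Submodule F V) (x : ↥(D.Aim 1 p)) :
    ((D.preA p x : ↥p) : V) = D.A.symm (x : V) := rfl

lemma preA_add (p : Submodule F V) (a b : ↥(D.Aim 1 p)) :
    D.preA p (a + b) = D.preA p a + D.preA p b := by
  apply Subtype.ext
  show D.A.symm ((a : V) + (b : V)) = D.A.symm (a : V) + D.A.symm (b : V)
  rw [map_add]

lemma preA_smul (p : Submodule F V) (c : F) (a : ↥(D.Aim 1 p)) :
    D.preA p (c • a) = D.φ.symm c • D.preA p a := by
  apply Subtype.ext
  show D.A.symm (c • (a : V)) = D.φ.symm c • D.A.symm (a : V)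
  rw [D.hA_symm]

/-- `A` as a map `p → Aim 1 p`. -/
def postA (p : Submodule F V) (x : ↥p) : ↥(D.Aim 1 p) := ⟨D.A (x : V), ⟨(x : V), x.2, D.Ai_one _⟩⟩

lemma postA_val (p : Submodule F V) (x : ↥p) : ((D.postA p x) : V) = D.A (x : V) := rfl

lemma postA_add (p : Submodule F V) (a b : ↥p) :
    D.postA p (a + b) = D.postA p a + D.postA p b := by
  apply Subtype.ext
  show D.A ((a : V) + (b : V)) = D.A (a : V) + D.A (b : V)
  rw [map_add]

lemma postA_smul (p : Submodule F V) (c : F) (a : ↥p) :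
    D.postA p (c • a) = D.φ c • D.postA p a := by
  apply Subtype.ext
  show D.A (c • (a : V)) = D.φ c • D.A (a : V)
  rw [D.hA]

lemma MIso.shift1 {t : ℕ} {p q : Submodule F V} (hp : D.St t p)
    (h : D.MIso t p q) : D.MIso t (D.Aim 1 p) (D.Aim 1 q) := by
  obtain ⟨f, hfc, hfi, hfr⟩ := h
  let g : ↥(D.Aim 1 p) →ₗ[F] V :=
    { toFun := fun x => D.A (f (D.preA p x))
      map_add' := by
        intro a b
        show D.A (f (D.preA p (a + b))) = D.A (f (D.preA p a)) + D.A (f (D.preA p b))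
        rw [D.preA_add, map_add, map_add]
      map_smul' := by
        intro c a
        show D.A (f (D.preA p (c • a))) = c • D.A (f (D.preA p a))
        rw [D.preA_smul, map_smul, D.hA, D.φ.apply_symm_apply] }
  have hgval : ∀ x : ↥(D.Aim 1 p), g x = D.A (f (D.preA p x)) := fun _ => rfl
  refine ⟨g, ?_, ?_, ?_⟩
  · intro x y hxy
    rw [hgval, hgval]
    have harg : D.preA p y = ⟨D.Ai t ((D.preA p x : ↥p) : V), hp _ (D.preA p x).2⟩ := by
      apply Subtype.ext
      show D.A.symm (y : V) = D.Ai t ((D.preA p x : ↥p) : V)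
      rw [hxy, D.Asymm_Ai_comm]
      rfl
    rw [harg, hfc (D.preA p x) _ rfl]
    rw [← D.Ai_one (D.Ai t _), ← D.Ai_add_apply, Nat.add_comm, D.Ai_add_apply, D.Ai_one]
  · intro a b hab
    rw [hgval, hgval] at hab
    have h1 := hfi (D.A.injective hab)
    have h2 : D.A.symm (a : V) = D.A.symm (b : V) := congrArg Subtype.val h1
    exact Subtype.ext (D.A.symm.injective h2)
  · apply le_antisymm
    · rintro _ ⟨x, rfl⟩
      rw [hgval]
      exact ⟨f (D.preA p x), hfr ▸ LinearMap.mem_range_self f _, D.Ai_one _⟩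
    · rintro _ ⟨w, hw, rfl⟩
      rw [← hfr] at hw
      obtain ⟨z, rfl⟩ := hw
      refine ⟨D.postA p z, ?_⟩
      rw [hgval]
      have : D.preA p (D.postA p z) = z := by
        apply Subtype.ext
        show D.A.symm (D.A (z : V)) = (z : V)
        rw [D.A.symm_apply_apply]
      rw [this, D.Ai_one]

lemma MIso.unshift1 {t : ℕ} {p q : Submodule F V} (hp : D.St t p)
    (h : D.MIso t (D.Aim 1 p) (D.Aim 1 q)) : D.MIso t p q := by
  obtain ⟨f, hfc, hfi, hfr⟩ := h
  let g : ↥p →ₗ[F] V :=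
    { toFun := fun x => D.A.symm (f (D.postA p x))
      map_add' := by
        intro a b
        show D.A.symm (f (D.postA p (a + b))) = _
        rw [D.postA_add, map_add, map_add]
      map_smul' := by
        intro c a
        show D.A.symm (f (D.postA p (c • a))) = c • D.A.symm (f (D.postA p a))
        rw [D.postA_smul, map_smul, D.hA_symm, D.φ.symm_apply_apply] }
  have hgval : ∀ x : ↥p, g x = D.A.symm (f (D.postA p x)) := fun _ => rfl
  have hAimst : D.St t (D.Aim 1 p) := hp.Aim
  refine ⟨g, ?_, ?_, ?_⟩
  · intro x y hxy
    rw [hgval, hgval]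
    have harg : D.postA p y
        = ⟨D.Ai t ((D.postA p x : _) : V), hAimst _ (D.postA p x).2⟩ := by
      apply Subtype.ext
      show D.A (y : V) = D.Ai t (D.A (x : V))
      rw [hxy, D.A_Ai_comm]
    rw [harg, hfc (D.postA p x) _ rfl, D.Asymm_Ai_comm]
  · intro a b hab
    rw [hgval, hgval] at hab
    have h1 := hfi (D.A.symm.injective hab)
    have h2 : D.A (a : V) = D.A (b : V) := congrArg Subtype.val h1
    exact Subtype.ext (D.A.injective h2)
  · apply le_antisymm
    · rintro _ ⟨x, rfl⟩
      rw [hgval]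
      have : f (D.postA p x) ∈ D.Aim 1 q := hfr ▸ LinearMap.mem_range_self f _
      exact D.mem_Aim1 this
    · intro w hw
      have : D.A w ∈ D.Aim 1 q := ⟨w, hw, D.Ai_one _⟩
      rw [← hfr] at this
      obtain ⟨z, hz⟩ := this
      have hzp : D.A.symm (z : V) ∈ p := D.mem_Aim1 z.2
      refine ⟨⟨D.A.symm (z : V), hzp⟩, ?_⟩
      rw [hgval]
      have harg : D.postA p ⟨D.A.symm (z : V), hzp⟩ = z := by
        apply Subtype.ext
        show D.A (D.A.symm (z : V)) = (z : V)
        rw [D.A.apply_symm_apply]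
      rw [harg, hz, D.A.symm_apply_apply]

lemma MIso.shift {t : ℕ} {p q : Submodule F V} (hp : D.St t p) (hq : D.St t q)
    (h : D.MIso t p q) (k : ℕ) : D.MIso t (D.Aim k p) (D.Aim k q) := by
  induction k with
  | zero => rwa [D.Aim_zero, D.Aim_zero]
  | succ n ih =>
      have h1 := MIso.shift1 D (hp.Aim (i := n)) ih
      rwa [D.Aim_Aim, D.Aim_Aim, Nat.add_comm 1 n] at h1

lemma MIso.unshift {t : ℕ} {p q : Submodule F V} (hp : D.St t p)
    (h : D.MIso t (D.Aim k p) (D.Aim k q)) : D.MIso t p q := by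
  induction k with
  | zero => rwa [D.Aim_zero, D.Aim_zero] at h
  | succ n ih =>
      apply ih
      apply MIso.unshift1 D (hp.Aim (i := n))
      rwa [D.Aim_Aim, D.Aim_Aim, Nat.add_comm 1 n]

lemma hom_to_MIso {t : ℕ} {Z S : Submodule F V} {f : ↥Z →ₗ[F] V}
    (hZ : D.Simp t Z) (hS : D.Simp t S) (hcomm : D.Comm t Z f) (hne : f ≠ 0)
    (hrange : LinearMap.range f ≤ S) : D.MIso t Z S := by
  have hKst : D.St t ((LinearMap.ker f).map Z.subtype) := by
    rintro _ ⟨z, hz, rfl⟩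
    have hz0 : f z = 0 := hz
    have hmem : D.Ai t ((z : V)) ∈ Z := hZ.2.1 _ z.2
    refine ⟨⟨D.Ai t (z : V), hmem⟩, ?_, rfl⟩
    exact LinearMap.mem_ker.mpr (by rw [hcomm z _ rfl, hz0, D.Ai_zero])
  have hKle : (LinearMap.ker f).map Z.subtype ≤ Z := Submodule.map_subtype_le _ _
  have hKne : (LinearMap.ker f).map Z.subtype ≠ Z := by
    intro hc
    apply hne
    ext z
    show f z = 0
    have hz : (z : V) ∈ (LinearMap.ker f).map Z.subtype := by rw [hc]; exact z.2
    obtain ⟨z', hz', hzz⟩ := hz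
    have hz'' : z' = z := Subtype.ext hzz
    rw [← hz'']
    exact hz'
  have hKbot : (LinearMap.ker f).map Z.subtype = ⊥ := by
    by_contra hc
    exact hKne (hZ.2.2 _ hKle hKst hc)
  have hinj : Function.Injective ⇑f := by
    rw [← LinearMap.ker_eq_bot, eq_bot_iff]
    intro z hz
    have hmem : (z : V) ∈ (LinearMap.ker f).map Z.subtype := ⟨z, hz, rfl⟩
    rw [hKbot, Submodule.mem_bot] at hmem
    rw [Submodule.mem_bot]
    exact Subtype.ext (by simpa using hmem)
  have hrst : D.St t (LinearMap.range f) := D.range_st hZ.2.1 hcomm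
  have hrbot : LinearMap.range f ≠ ⊥ := by
    intro hr
    apply hne
    ext z
    show f z = 0
    have : f z ∈ (⊥ : Submodule F V) := hr ▸ LinearMap.mem_range_self f z
    simpa using this
  exact ⟨f, hcomm, hinj, hS.2.2 _ hrange hrst hrbot⟩

lemma star [FiniteDimensional F V] {t : ℕ} :
    ∀ (m : ℕ) (X : ℕ → Submodule F V), (∀ l < m, X l = ⊥ ∨ D.Simp t (X l)) →
      ∀ Z : Submodule F V, D.Simp t Z → Z ≤ Wseq X m → ∃ l < m, D.MIso t Z (X l) := by
  intro m
  induction m with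
  | zero =>
      intro X hX Z hZ hle
      exfalso
      exact hZ.1 (le_bot_iff.1 hle)
  | succ k ih =>
      intro X hX Z hZ hle
      have hXk := fun l hl => hX l (Nat.lt_succ_of_lt hl)
      set P := Wseq X k with hP
      have hPst : D.St t P := by
        apply St_Wseq
        intro l hl
        rcases hXk l hl with h | h
        · rw [h]; exact St.bot D t
        · exact h.2.1
      rcases hX k (Nat.lt_succ_self k) with hbot | hSk
      · -- X k = ⊥
        have : Z ≤ P := by
          have : Wseq X (k + 1) = P := by rw [Wseq, hbot, sup_bot_eq]
          rwa [this] at hle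
        obtain ⟨l, hl, hiso⟩ := ih X hXk Z hZ this
        exact ⟨l, Nat.lt_succ_of_lt hl, hiso⟩
      · by_cases hSP : X k ≤ P
        · have : Z ≤ P := by
            have : Wseq X (k + 1) = P := by rw [Wseq, sup_eq_left.2 hSP]
            rwa [this] at hle
          obtain ⟨l, hl, hiso⟩ := ih X hXk Z hZ this
          exact ⟨l, Nat.lt_succ_of_lt hl, hiso⟩
        · -- X k ⊓ P = ⊥
          have hd : X k ⊓ P = ⊥ := by
            by_contra hc
            have : X k ⊓ P = X k := hSk.2.2 _ inf_le_left (St.inf D hSk.2.1 hPst) hc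
            exact hSP (by rw [← this]; exact inf_le_right)
          obtain ⟨cP, hcP⟩ := Submodule.exists_isCompl (P ⊔ X k)
          set P' := P ⊔ cP with hP'
          have hcompl : IsCompl P' (X k) := by
            constructor
            · rw [disjoint_iff]
              rw [eq_bot_iff]
              intro x hx
              obtain ⟨hx1, hx2⟩ := hx
              obtain ⟨a, ha, c, hc, rfl⟩ := Submodule.mem_sup.1 hx1
              have hcmem : c ∈ cP ⊓ (P ⊔ X k) := by
                constructor
                · exact hc
                · have h1 : a + c - a ∈ P ⊔ X k :=
                    Submodule.sub_mem _ (Submodule.mem_sup_right hx2) (Submodule.mem_sup_left ha)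
                  simpa using h1
              rw [inf_comm, disjoint_iff.1 hcP.disjoint] at hcmem
              rw [Submodule.mem_bot] at hcmem
              subst hcmem
              have : a + 0 ∈ X k ⊓ P := ⟨by simpa using hx2, by simpa using ha⟩
              rw [hd, Submodule.mem_bot] at this
              simpa using this
            · rw [codisjoint_iff, hP', sup_right_comm]
              exact codisjoint_iff.1 hcP.codisjoint
          set π := (X k).linearProjOfIsCompl P' hcompl.symm with hπ
          set π' := (X k).subtype.comp π with hπ'
          have hπP : ∀ a ∈ P, π' a = 0 := by
            intro a ha
            have : π a = 0 := Submodule.linearProjOfIsCompl_apply_right hcompl.symm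
              ⟨a, Submodule.mem_sup_left ha⟩
            rw [hπ', LinearMap.comp_apply, this, map_zero]
          have hπS : ∀ s ∈ X k, π' s = s := by
            intro s hs
            have : π s = ⟨s, hs⟩ := Submodule.linearProjOfIsCompl_apply_left hcompl.symm ⟨s, hs⟩
            rw [hπ', LinearMap.comp_apply, this]
            rfl
          have hdec : ∀ w ∈ P ⊔ X k, (w - π' w ∈ P) ∧ π' w ∈ X k ∧
              (D.Ai t w - π' (D.Ai t w) ∈ P) ∧ π' (D.Ai t w) = D.Ai t (π' w) := by
            intro w hw
            obtain ⟨a, ha, c, hc, rfl⟩ := Submodule.mem_sup.1 hw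
            have hw1 : π' (a + c) = c := by rw [map_add, hπP a ha, hπS c hc, zero_add]
            have h2 : D.Ai t (a + c) = D.Ai t a + D.Ai t c := D.Ai_add t a c
            have hw2 : π' (D.Ai t (a + c)) = D.Ai t c := by
              rw [h2, map_add, hπP _ (hPst a ha), hπS _ (hSk.2.1 c hc), zero_add]
            refine ⟨by rw [hw1]; simpa using ha, by rw [hw1]; exact hc, ?_, by rw [hw1, hw2]⟩
            rw [hw2, h2]
            simpa using hPst a ha
          have hZle' : Z ≤ P ⊔ X k := hle
          set g := π'.comp Z.subtype with hg
          have hgcomm : D.Comm t Z g := by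
            intro x y hxy
            rw [hg, LinearMap.comp_apply, LinearMap.comp_apply]
            show π' (y : V) = D.Ai t (π' (x : V))
            rw [hxy]
            exact (hdec _ (hZle' x.2)).2.2.2
          by_cases hgz : g = 0
          · have : Z ≤ P := by
              intro z hz
              have h0 : π' z = 0 := by
                have := congrArg (fun h : ↥Z →ₗ[F] V => h ⟨z, hz⟩) hgz
                simpa [hg] using this
              have := (hdec z (hZle' hz)).1
              rwa [h0, sub_zero] at this
            obtain ⟨l, hl, hiso⟩ := ih X hXk Z hZ this
            exact ⟨l, Nat.lt_succ_of_lt hl, hiso⟩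
          · have hrange : LinearMap.range g ≤ X k := by
              rintro _ ⟨z, rfl⟩
              exact (hdec _ (hZle' z.2)).2.1
            exact ⟨k, Nat.lt_succ_self k, D.hom_to_MIso hZ hSk hgcomm hgz hrange⟩

section IsoCl

variable {t : ℕ} {N₁ : Submodule F V}

lemma Aim_add_t (hper : D.Aim t N₁ = N₁) (i : ℕ) : D.Aim (i + t) N₁ = D.Aim i N₁ := by
  rw [← D.Aim_Aim i t, hper]

lemma Aim_mul_t (hper : D.Aim t N₁ = N₁) (k : ℕ) : D.Aim (k * t) N₁ = N₁ := by
  induction k with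
  | zero => rw [Nat.zero_mul]; exact D.Aim_zero N₁
  | succ n ih => rw [Nat.succ_mul, Aim_add_t D hper, ih]

lemma st_Ni (hN : D.Simp t N₁) (i : ℕ) : D.St t (D.Aim i N₁) := St.Aim D hN.2.1

lemma simp_Ni (hN : D.Simp t N₁) (i : ℕ) : D.Simp t (D.Aim i N₁) := by
  refine ⟨fun hc => hN.1 (D.Aim_eq_bot_iff.1 hc), st_Ni D hN i, ?_⟩
  intro q hq hqst hqbot
  have h1 : D.Apre i q ≤ N₁ := D.Apre_le hq
  have h2 : D.St t (D.Apre i q) := St.Apre D hqst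
  have h3 : D.Apre i q ≠ ⊥ := D.Apre_ne_bot hqbot
  have h4 := hN.2.2 _ h1 h2 h3
  rw [← D.Aim_Apre i q, h4]

/-- `A^[i] N₁ ≅ A^[j] N₁` as `Dₜ`-modules. -/
def IsoCl (t : ℕ) (N₁ : Submodule F V) (i j : ℕ) : Prop :=
  D.MIso t (D.Aim i N₁) (D.Aim j N₁)

lemma IsoCl.rfl (i : ℕ) : D.IsoCl t N₁ i i := MIso.refl D t _

lemma IsoCl.symm' (hN : D.Simp t N₁) {i j : ℕ} (h : D.IsoCl t N₁ i j) :
    D.IsoCl t N₁ j i := MIso.symm D (st_Ni D hN i) h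

lemma IsoCl.trans' (hN : D.Simp t N₁) {i j l : ℕ} (h1 : D.IsoCl t N₁ i j)
    (h2 : D.IsoCl t N₁ j l) : D.IsoCl t N₁ i l :=
  MIso.trans D (st_Ni D hN i) h1 h2

lemma IsoCl.shift' (hN : D.Simp t N₁) {i j : ℕ} (k : ℕ) (h : D.IsoCl t N₁ i j) :
    D.IsoCl t N₁ (i + k) (j + k) := by
  have := MIso.shift D (st_Ni D hN i) (st_Ni D hN j) h k
  unfold IsoCl
  rwa [D.Aim_Aim, D.Aim_Aim, Nat.add_comm k i, Nat.add_comm k j] at this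

lemma IsoCl.unshift' (hN : D.Simp t N₁) {i j : ℕ} (k : ℕ) (h : D.IsoCl t N₁ (i + k) (j + k)) :
    D.IsoCl t N₁ i j := by
  apply MIso.unshift D (k := k) (st_Ni D hN i)
  unfold IsoCl at h
  rwa [D.Aim_Aim, D.Aim_Aim, Nat.add_comm k i, Nat.add_comm k j]

lemma IsoCl.t_zero (hper : D.Aim t N₁ = N₁) : D.IsoCl t N₁ t 0 := by
  unfold IsoCl
  rw [D.Aim_zero, hper]
  exact MIso.refl D t N₁

lemma IsoCl.add_zero' (hN : D.Simp t N₁) {a b : ℕ} (ha : D.IsoCl t N₁ a 0)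
    (hb : D.IsoCl t N₁ b 0) : D.IsoCl t N₁ (a + b) 0 := by
  have h1 : D.IsoCl t N₁ (a + b) b := by
    have := IsoCl.shift' D hN b ha
    rwa [Nat.zero_add] at this
  exact IsoCl.trans' D hN h1 hb

lemma IsoCl.mul_zero' (hN : D.Simp t N₁) {u : ℕ} (hu : D.IsoCl t N₁ u 0) (k : ℕ) :
    D.IsoCl t N₁ (k * u) 0 := by
  induction k with
  | zero =>
      have := IsoCl.rfl D (t := t) (N₁ := N₁) 0
      rwa [Nat.zero_mul]
  | succ n ih =>
      rw [Nat.succ_mul]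
      exact IsoCl.add_zero' D hN ih hu

lemma IsoCl.sub_zero' (hN : D.Simp t N₁) {a r : ℕ} (har : D.IsoCl t N₁ (a + r) 0)
    (ha : D.IsoCl t N₁ a 0) : D.IsoCl t N₁ r 0 := by
  have h1 : D.IsoCl t N₁ (a + r) a :=
    IsoCl.trans' D hN har (IsoCl.symm' D hN ha)
  have h2 : D.IsoCl t N₁ (r + a) (0 + a) := by
    rwa [Nat.add_comm r a, Nat.zero_add]
  exact IsoCl.unshift' D hN a h2

end IsoCl

set_option maxHeartbeats 1000000 in
set_option synthInstance.maxHeartbeats 400000 in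
lemma homog [FiniteDimensional F V] [IsAlgClosed (fixedSubfield D.φ)]
    {t : ℕ} (ht : 0 < t) {N₁ : Submodule F V}
    (hirr : ∀ p : Submodule F V, D.St 1 p → p = ⊥ ∨ p = ⊤)
    (hN : D.Simp t N₁) (hper : D.Aim t N₁ = N₁) (htop : N₁ ≠ ⊤)
    (h1 : D.MIso t (D.Aim 1 N₁) (D.Aim 0 N₁)) : False := by
  classical
  rw [D.Aim_zero] at h1
  obtain ⟨f₁, hf₁c, hf₁i, hf₁r⟩ := h1
  haveI hntN : Nontrivial ↥N₁ := Submodule.nontrivial_iff_ne_bot.2 hN.1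
  have hmemA : ∀ x : ↥N₁, D.A (x : V) ∈ D.Aim 1 N₁ := fun x => ⟨(x : V), x.2, D.Ai_one _⟩
  have hf₁mem : ∀ z : ↥(D.Aim 1 N₁), f₁ z ∈ N₁ := fun z => by
    have hm := LinearMap.mem_range_self f₁ z; rwa [hf₁r] at hm
  -- the map B = ψ ∘ A : N₁ → N₁
  set B : ↥N₁ → ↥N₁ :=
    fun x => ⟨f₁ ⟨D.A (x : V), hmemA x⟩, hf₁mem _⟩ with hB
  have hBval : ∀ x, (B x : V) = f₁ ⟨D.A (x : V), hmemA x⟩ := fun _ => rfl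
  have hBadd : ∀ x y, B (x + y) = B x + B y := by
    intro x y
    apply Subtype.ext
    have harg : (⟨D.A ((x + y : ↥N₁) : V), hmemA (x + y)⟩ : ↥(D.Aim 1 N₁))
        = ⟨D.A (x : V), hmemA x⟩ + ⟨D.A (y : V), hmemA y⟩ := Subtype.ext (by
          show D.A ((x + y : ↥N₁) : V) = D.A (x : V) + D.A (y : V)
          rw [Submodule.coe_add, map_add])
    have h0 := congrArg f₁ harg
    rw [map_add] at h0
    exact h0
  have hBsmul : ∀ (c : F) x, B (c • x) = D.φ c • B x := by
    intro c x
    apply Subtype.ext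
    have harg : (⟨D.A ((c • x : ↥N₁) : V), hmemA (c • x)⟩ : ↥(D.Aim 1 N₁))
        = D.φ c • ⟨D.A (x : V), hmemA x⟩ := Subtype.ext (by
          show D.A ((c • x : ↥N₁) : V) = D.φ c • D.A (x : V)
          rw [Submodule.coe_smul, D.hA])
    have h0 := congrArg f₁ harg
    rw [map_smul] at h0
    exact h0
  have hBinj : Function.Injective B := by
    intro a b hab
    have h0 : f₁ ⟨D.A (a : V), hmemA a⟩ = f₁ ⟨D.A (b : V), hmemA b⟩ := by
      rw [← hBval, ← hBval, hab]
    have h1' := hf₁i h0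
    have h2 : D.A (a : V) = D.A (b : V) := congrArg Subtype.val h1'
    exact Subtype.ext (D.A.injective h2)
  have hBsurj : Function.Surjective B := by
    intro y
    have hy : (y : V) ∈ LinearMap.range f₁ := hf₁r.symm ▸ y.2
    obtain ⟨z, hz⟩ := hy
    have hz2 : (z : V) ∈ D.Aim 1 N₁ := z.2
    obtain ⟨w, hw, hwz⟩ := hz2
    refine ⟨⟨w, hw⟩, ?_⟩
    apply Subtype.ext
    rw [hBval]
    have harg : (⟨D.A (w : V), hmemA ⟨w, hw⟩⟩ : ↥(D.Aim 1 N₁)) = z := by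
      apply Subtype.ext
      show D.A w = (z : V)
      rw [← hwz, D.Ai_one]
    rw [harg, hz]
  set AtN : ↥N₁ → ↥N₁ := fun x => ⟨D.Ai t (x : V), hN.2.1 _ x.2⟩ with hAtN
  have hAtNval : ∀ x, (AtN x : V) = D.Ai t (x : V) := fun _ => rfl
  have hAtNadd : ∀ x y, AtN (x + y) = AtN x + AtN y := by
    intro x y
    apply Subtype.ext
    show D.Ai t ((x + y : ↥N₁) : V) = ((AtN x + AtN y : ↥N₁) : V)
    rw [Submodule.coe_add, Submodule.coe_add, D.Ai_add]
  have hAtNsmul : ∀ (c : F) x, AtN (c • x) = ((⇑D.φ)^[t] c) • AtN x := by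
    intro c x
    apply Subtype.ext
    show D.Ai t ((c • x : ↥N₁) : V) = ((((⇑D.φ)^[t] c) • AtN x : ↥N₁) : V)
    rw [Submodule.coe_smul, Submodule.coe_smul, D.Ai_smul]
  have hAtNzero : AtN 0 = 0 := by
    apply Subtype.ext
    show D.Ai t ((0 : ↥N₁) : V) = ((0 : ↥N₁) : V)
    rw [Submodule.coe_zero, D.Ai_zero]
  have hAtNinj : Function.Injective AtN := by
    intro a b hab
    exact Subtype.ext (D.Ai_injective t (congrArg Subtype.val hab))
  have hAtNsurj : Function.Surjective AtN := by
    intro y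
    have hy : (y : V) ∈ D.Aim t N₁ := hper.symm ▸ y.2
    obtain ⟨w, hw, hwz⟩ := hy
    exact ⟨⟨w, hw⟩, Subtype.ext hwz⟩
  have hBAt : ∀ x, B (AtN x) = AtN (B x) := by
    intro x
    apply Subtype.ext
    have hmem2 : D.Ai t (D.A (x : V)) ∈ D.Aim 1 N₁ := (St.Aim D hN.2.1) _ (hmemA x)
    have harg : (⟨D.A ((AtN x : ↥N₁) : V), hmemA (AtN x)⟩ : ↥(D.Aim 1 N₁))
        = ⟨D.Ai t (D.A (x : V)), hmem2⟩ := Subtype.ext (by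
          show D.A (D.Ai t (x : V)) = D.Ai t (D.A (x : V))
          exact D.A_Ai_comm t (x : V))
    have h0 := congrArg f₁ harg
    have h1 := hf₁c ⟨D.A (x : V), hmemA x⟩ ⟨D.Ai t (D.A (x : V)), hmem2⟩ rfl
    exact h0.trans h1
  set Beq := Equiv.ofBijective B ⟨hBinj, hBsurj⟩ with hBeq
  set Binv : ↥N₁ → ↥N₁ := ⇑Beq.symm with hBinv
  have hBinvB : ∀ x, Binv (B x) = x := fun x => Beq.symm_apply_apply x
  have hBBinv : ∀ x, B (Binv x) = x := fun x => Beq.apply_symm_apply x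
  have hBinvadd : ∀ x y, Binv (x + y) = Binv x + Binv y := by
    intro x y
    apply hBinj
    rw [hBBinv, hBadd, hBBinv, hBBinv]
  have hBinvsmul : ∀ (c : F) x, Binv (c • x) = D.φ.symm c • Binv x := by
    intro c x
    apply hBinj
    rw [hBBinv, hBsmul, hBBinv, D.φ.apply_symm_apply]
  have hBinvAt : ∀ x, Binv (AtN x) = AtN (Binv x) := by
    intro x
    apply hBinj
    rw [hBBinv, hBAt, hBBinv]
  have hBinvIadd : ∀ (i : ℕ) (x y), Binv^[i] (x + y) = Binv^[i] x + Binv^[i] y := by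
    intro i
    induction i with
    | zero => intro x y; rfl
    | succ n ih =>
        intro x y
        rw [Function.iterate_succ_apply', Function.iterate_succ_apply',
          Function.iterate_succ_apply', ih, hBinvadd]
  have hBinvIsmul : ∀ (i : ℕ) (c : F) (x), Binv^[i] (c • x) = ((⇑D.φ.symm)^[i] c) • Binv^[i] x := by
    intro i
    induction i with
    | zero => intro c x; rfl
    | succ n ih =>
        intro c x
        rw [Function.iterate_succ_apply', Function.iterate_succ_apply', ih, hBinvsmul,
          Function.iterate_succ_apply']
  have hBinvIAt : ∀ (i : ℕ) (x), Binv^[i] (AtN x) = AtN (Binv^[i] x) := by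
    intro i
    induction i with
    | zero => intro x; rfl
    | succ n ih =>
        intro x
        rw [Function.iterate_succ_apply', Function.iterate_succ_apply', ih, hBinvAt]
  -- g = A^t ∘ B^{-t}, an F-linear endomorphism of N₁
  set gE : Module.End F ↥N₁ :=
    { toFun := fun x => AtN (Binv^[t] x)
      map_add' := by
        intro x y
        show AtN (Binv^[t] (x + y)) = AtN (Binv^[t] x) + AtN (Binv^[t] y)
        rw [hBinvIadd, hAtNadd]
      map_smul' := by
        intro c x
        show AtN (Binv^[t] (c • x)) = c • AtN (Binv^[t] x)
        rw [hBinvIsmul, hAtNsmul, D.phi_symm_iter] } with hgE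
  have hgEval : ∀ x, gE x = AtN (Binv^[t] x) := fun _ => rfl
  have hgEAt : ∀ x, gE (AtN x) = AtN (gE x) := by
    intro x
    rw [hgEval, hgEval, hBinvIAt]
  have hgEpowAt : ∀ (k : ℕ) (x), (gE ^ k) (AtN x) = AtN ((gE ^ k) x) := by
    intro k
    induction k with
    | zero => intro x; rfl
    | succ n ih =>
        intro x
        rw [pow_succ, Module.End.mul_apply, Module.End.mul_apply, hgEAt, ih]
  have hgEBinv : ∀ x, gE (Binv x) = Binv (gE x) := by
    intro x
    rw [hgEval, hgEval]
    have : Binv^[t] (Binv x) = Binv (Binv^[t] x) := by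
      rw [← Function.iterate_succ_apply, Function.iterate_succ_apply']
    rw [this, hBinvAt]
  have hgEpowBinv : ∀ (k : ℕ) (x), (gE ^ k) (Binv x) = Binv ((gE ^ k) x) := by
    intro k
    induction k with
    | zero => intro x; rfl
    | succ n ih =>
        intro x
        rw [pow_succ, Module.End.mul_apply, Module.End.mul_apply, hgEBinv, ih]
  have hgEpowBinvI : ∀ (k i : ℕ) (x), (gE ^ k) (Binv^[i] x) = Binv^[i] ((gE ^ k) x) := by
    intro k i
    induction i with
    | zero => intro x; rfl
    | succ n ih =>
        intro x
        rw [Function.iterate_succ_apply', Function.iterate_succ_apply', hgEpowBinv, ih]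
  haveI hEnt : Nontrivial (Module.End F ↥N₁) := by
    obtain ⟨x, hx⟩ := exists_ne (0 : ↥N₁)
    exact ⟨1, 0, fun h => hx (by simpa using congrArg (fun g : Module.End F ↥N₁ => g x) h)⟩
  have hint : IsIntegral F gE := ⟨gE.charpoly, gE.charpoly_monic, gE.aeval_self_charpoly⟩
  set μ := minpoly F gE with hμ
  set d := μ.natDegree with hdd
  have hd : 0 < d := minpoly.natDegree_pos hint
  -- conjugation of polynomials by A^t
  have hkey : ∀ (p : F[X]) (y : ↥N₁),
      (Polynomial.aeval gE (p.map (D.phiIt t))) (AtN y) = AtN ((Polynomial.aeval gE p) y) := by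
    intro p
    induction p using Polynomial.induction_on' with
    | add p q hp hq =>
        intro y
        rw [Polynomial.map_add, map_add, map_add, LinearMap.add_apply, LinearMap.add_apply,
          hp, hq, hAtNadd]
    | monomial n a =>
        intro y
        rw [Polynomial.map_monomial, Polynomial.aeval_monomial, Polynomial.aeval_monomial]
        rw [Module.End.mul_apply, Module.End.mul_apply]
        rw [Module.algebraMap_end_apply, Module.algebraMap_end_apply]
        rw [hgEpowAt, hAtNsmul]
        rfl
  have hconj : Polynomial.aeval gE (μ.map (D.phiIt t)) = 0 := by
    ext y
    obtain ⟨z, rfl⟩ := hAtNsurj y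
    rw [hkey, minpoly.aeval]
    rw [LinearMap.zero_apply, hAtNzero]
    rfl
  have hμeq : μ.map (D.phiIt t) = μ := by
    have hmm : (μ.map (D.phiIt t)).Monic := (minpoly.monic hint).map _
    have hdm : (μ.map (D.phiIt t)).degree = μ.degree := Polynomial.degree_map μ _
    have := minpoly.unique F gE hmm hconj (fun q hq1 hq2 => by
      rw [hdm]; exact minpoly.min F gE hq1 hq2)
    rw [this]
  have hμC : ∀ n, μ.coeff n ∈ fixedSubfield D.φ := by
    intro n
    have h0 : (⇑D.φ)^[t] (μ.coeff n) = μ.coeff n := by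
      have := congrArg (fun q => Polynomial.coeff q n) hμeq
      simpa [Polynomial.coeff_map, D.phiIt_apply] using this
    exact iter_fixed D.φ ht h0
  have hsum0 : gE ^ d + ∑ k ∈ Finset.range d, μ.coeff k • gE ^ k = 0 := by
    have h0 := minpoly.aeval F gE
    rw [(minpoly.monic hint).as_sum] at h0
    rw [map_add, map_pow, Polynomial.aeval_X, map_sum] at h0
    rw [← h0]
    congr 1
    refine Finset.sum_congr rfl fun k _ => ?_
    rw [map_mul, Polynomial.aeval_C, map_pow, Polynomial.aeval_X, Algebra.smul_def]
  -- the C = fixedSubfield φ module structure on Hom(N₁, V)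
  letI instK : Module ↥(fixedSubfield D.φ) (↥N₁ →ₗ[F] V) :=
    Module.compHom _ (fixedSubfield D.φ).subtype
  have hKsmul : ∀ (c : ↥(fixedSubfield D.φ)) (h : ↥N₁ →ₗ[F] V), c • h = (c : F) • h :=
    fun _ _ => rfl
  -- the twisted maps E i k = A^[i] ∘ incl ∘ g^k ∘ B^{-i}
  set E : ℕ → ℕ → (↥N₁ →ₗ[F] V) := fun i k =>
    { toFun := fun x => D.Ai i (((gE ^ k) (Binv^[i] x) : ↥N₁) : V)
      map_add' := by
        intro x y
        show D.Ai i (((gE ^ k) (Binv^[i] (x + y)) : ↥N₁) : V) = _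
        rw [hBinvIadd, map_add, Submodule.coe_add, D.Ai_add]
      map_smul' := by
        intro c x
        show D.Ai i (((gE ^ k) (Binv^[i] (c • x)) : ↥N₁) : V)
            = c • D.Ai i (((gE ^ k) (Binv^[i] x) : ↥N₁) : V)
        rw [hBinvIsmul, map_smul, Submodule.coe_smul, D.Ai_smul, D.phi_symm_iter] } with hE
  have hEval : ∀ i k x, E i k x = D.Ai i (((gE ^ k) (Binv^[i] x) : ↥N₁) : V) := fun _ _ _ => rfl
  -- σ(h) = A ∘ h ∘ B⁻¹
  set σfun : (↥N₁ →ₗ[F] V) → (↥N₁ →ₗ[F] V) := fun h =>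
    { toFun := fun x => D.A (h (Binv x))
      map_add' := by
        intro x y
        show D.A (h (Binv (x + y))) = D.A (h (Binv x)) + D.A (h (Binv y))
        rw [hBinvadd, map_add, map_add]
      map_smul' := by
        intro c x
        show D.A (h (Binv (c • x))) = c • D.A (h (Binv x))
        rw [hBinvsmul, map_smul, D.hA, D.φ.apply_symm_apply] } with hσfun
  have hσval : ∀ h x, σfun h x = D.A (h (Binv x)) := fun _ _ => rfl
  set σK : (↥N₁ →ₗ[F] V) →ₗ[↥(fixedSubfield D.φ)] (↥N₁ →ₗ[F] V) :=
    { toFun := σfun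
      map_add' := by
        intro a b
        ext x
        rw [LinearMap.add_apply, hσval, hσval, hσval, LinearMap.add_apply, map_add]
      map_smul' := by
        intro c a
        show σfun (c • a) = c • σfun a
        have h1 : ∀ x, σfun (c • a) x = D.A ((c : F) • a (Binv x)) := fun x => rfl
        have h2 : ∀ x, (c • σfun a) x = (c : F) • (D.A (a (Binv x))) := fun x => rfl
        ext x
        rw [h1, h2, D.hA]
        have hc : D.φ (c : F) = (c : F) := c.2
        rw [hc] } with hσK
  have hσE : ∀ i k, σfun (E i k) = E (i + 1) k := by
    intro i k
    ext x
    rw [hσval, hEval, hEval]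
    have h0 : Binv^[i] (Binv x) = Binv^[i + 1] x := (Function.iterate_succ_apply Binv i x).symm
    rw [h0, ← D.Ai_succ']
  have hEt : ∀ k, E t k = E 0 (k + 1) := by
    intro k
    ext x
    rw [hEval, hEval]
    show D.Ai t (((gE ^ k) (Binv^[t] x) : ↥N₁) : V) = (((gE ^ (k + 1)) x : ↥N₁) : V)
    have h0 : D.Ai t (((gE ^ k) (Binv^[t] x) : ↥N₁) : V) = ((AtN ((gE ^ k) (Binv^[t] x)) : ↥N₁) : V) := rfl
    rw [h0]
    congr 1
    rw [← hgEpowAt]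
    have h1 : AtN (Binv^[t] x) = gE x := rfl
    rw [h1, ← Module.End.mul_apply, ← pow_succ]
  have hE00 : E 0 0 = N₁.subtype := by
    ext x
    rw [hEval]
    rfl
  set gens : Set (↥N₁ →ₗ[F] V) := Set.range (fun ik : Fin t × Fin d => E ik.1 ik.2) with hgens
  set W := Submodule.span ↥(fixedSubfield D.φ) gens with hW
  haveI hWfd : FiniteDimensional ↥(fixedSubfield D.φ) ↥W :=
    FiniteDimensional.span_of_finite _ (Set.finite_range _)
  have hf₀W : N₁.subtype ∈ W := by
    apply Submodule.subset_span
    exact ⟨(⟨0, ht⟩, ⟨0, hd⟩), hE00⟩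
  have hf₀ne : N₁.subtype ≠ 0 := by
    obtain ⟨x, hx⟩ := exists_ne (0 : ↥N₁)
    intro h
    apply hx
    apply Subtype.ext
    have := congrArg (fun g : ↥N₁ →ₗ[F] V => g x) h
    simpa using this
  have hWstab : ∀ h ∈ W, σfun h ∈ W := by
    have hle : Submodule.map σK W ≤ W := by
      rw [hW, Submodule.map_span]
      apply Submodule.span_le.2
      rintro _ ⟨g, ⟨⟨i, k⟩, rfl⟩, rfl⟩
      have hg : σK (E (i : ℕ) (k : ℕ)) = E ((i : ℕ) + 1) (k : ℕ) := hσE i k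
      rw [hg]
      rcases Nat.lt_or_ge ((i : ℕ) + 1) t with hi | hi
      · exact Submodule.subset_span ⟨(⟨(i : ℕ) + 1, hi⟩, k), rfl⟩
      · have hieq : (i : ℕ) + 1 = t := le_antisymm i.2 hi
        rw [hieq, hEt]
        rcases Nat.lt_or_ge ((k : ℕ) + 1) d with hk | hk
        · exact Submodule.subset_span ⟨(⟨0, ht⟩, ⟨(k : ℕ) + 1, hk⟩), rfl⟩
        · have hkeq : (k : ℕ) + 1 = d := le_antisymm k.2 hk
          rw [hkeq]
          -- E 0 d = -(∑ k < d, μ.coeff k • E 0 k) ∈ W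
          have hEd : E 0 d = -(∑ l ∈ Finset.range d, μ.coeff l • E 0 l) := by
            apply eq_neg_of_add_eq_zero_left
            ext x
            rw [LinearMap.add_apply, LinearMap.zero_apply]
            have h2 : (∑ l ∈ Finset.range d, μ.coeff l • E 0 l) x
                = ∑ l ∈ Finset.range d, μ.coeff l • (((gE ^ l) x : ↥N₁) : V) := by
              rw [LinearMap.sum_apply]
              refine Finset.sum_congr rfl fun l _ => ?_
              rw [LinearMap.smul_apply, hEval]
              rfl
            rw [h2, hEval]
            have h3 : (((gE ^ d) (Binv^[0] x) : ↥N₁) : V) = (((gE ^ d) x : ↥N₁) : V) := rfl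
            show (((gE ^ d) (Binv^[0] x) : ↥N₁) : V) + _ = (0 : V)
            rw [h3]
            have h4 := congrArg (fun g : Module.End F ↥N₁ => g x) hsum0
            simp only [LinearMap.add_apply, LinearMap.sum_apply, LinearMap.smul_apply,
              LinearMap.zero_apply] at h4
            have h5 := congrArg (Subtype.val : ↥N₁ → V) h4
            rw [Submodule.coe_add, coe_sum''] at h5
            simpa using h5
          rw [hEd]
          apply Submodule.neg_mem
          apply Submodule.sum_mem
          intro l hl
          have : μ.coeff l • E 0 l = (⟨μ.coeff l, hμC l⟩ : ↥(fixedSubfield D.φ)) • E 0 l := rfl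
          rw [this]
          exact Submodule.smul_mem _ _
            (Submodule.subset_span ⟨(⟨0, ht⟩, ⟨l, Finset.mem_range.1 hl⟩), rfl⟩)
    intro h hh
    exact hle ⟨h, hh, rfl⟩
  set σW : Module.End ↥(fixedSubfield D.φ) ↥W := σK.restrict hWstab with hσW
  haveI : Nontrivial ↥W :=
    ⟨⟨⟨N₁.subtype, hf₀W⟩, 0, fun h => hf₀ne (by simpa using congrArg Subtype.val h)⟩⟩
  obtain ⟨c, hc⟩ := Module.End.exists_eigenvalue σW
  obtain ⟨v, hv⟩ := hc.exists_hasEigenvector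
  have hveq : σW v = c • v := hv.apply_eq_smul
  set f : ↥N₁ →ₗ[F] V := (v : ↥N₁ →ₗ[F] V) with hf
  have hσf : σfun f = (c : F) • f := by
    have h0 := congrArg (Subtype.val : ↥W → (↥N₁ →ₗ[F] V)) hveq
    rw [LinearMap.restrict_coe_apply] at h0
    rw [hf]
    rw [← hKsmul]
    exact h0
  have hfne : f ≠ 0 := by
    intro h
    exact hv.2 (Subtype.ext h)
  set X := LinearMap.range f with hX
  have hXst : D.St 1 X := by
    rintro _ ⟨x, rfl⟩
    have h0 : D.Ai 1 (f x) = D.A (f x) := D.Ai_one _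
    rw [h0]
    have h1 : f x = f (Binv (B x)) := by rw [hBinvB]
    rw [h1]
    have h2 : D.A (f (Binv (B x))) = σfun f (B x) := rfl
    rw [h2, hσf, LinearMap.smul_apply]
    exact Submodule.smul_mem _ _ ⟨B x, rfl⟩
  rcases hirr X hXst with hbot | htop'
  · apply hfne
    ext z
    show f z = 0
    have : f z ∈ X := ⟨z, rfl⟩
    rw [hbot, Submodule.mem_bot] at this
    simpa using this
  · have h1 : finrank F ↥X ≤ finrank F ↥N₁ := LinearMap.finrank_range_le f
    have h2 : finrank F ↥N₁ < finrank F V := Submodule.finrank_lt htop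
    have h3 : finrank F ↥X = finrank F V := by rw [htop']; exact finrank_top F V
    omega

set_option maxHeartbeats 1000000 in
theorem main [FiniteDimensional F V] [IsAlgClosed (fixedSubfield D.φ)]
    (hirr : ∀ p : Submodule F V, D.St 1 p → p = ⊥ ∨ p = ⊤)
    (t : ℕ) (ht : 1 ≤ t) (p₀ : Submodule F V) (hp₀ : D.St t p₀)
    (hp₀bot : p₀ ≠ ⊥) (hp₀top : p₀ ≠ ⊤) :
    ∃ s : ℕ, 1 < s ∧ s ∣ Nat.gcd t (finrank F V) ∧
      ∃ N : Submodule F V, D.St s N ∧ N ≠ ⊥ ∧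
        (∀ q ≤ N, D.St s q → q = ⊥ ∨ q = N) ∧
        ∀ v : V, ∃! c : Fin s → N, v = ∑ i : Fin s, D.Ai (i : ℕ) (c i : V) := by
  classical
  have ht0 : 0 < t := ht
  obtain ⟨N₁, hN₁le, hN₁⟩ := D.simp_exists hp₀bot hp₀
  have hN₁top : N₁ ≠ ⊤ := fun h => hp₀top (top_unique (h ▸ hN₁le))
  have hper : D.Aim t N₁ = N₁ := by
    apply hN₁.2.2
    · exact D.St_iff_Aim_le.1 hN₁.2.1
    · exact St.Aim D hN₁.2.1
    · exact fun hc => hN₁.1 (D.Aim_eq_bot_iff.1 hc)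
  have hex : ∃ i, 0 < i ∧ D.IsoCl t N₁ i 0 := ⟨t, ht0, IsoCl.t_zero D hper⟩
  set u := Nat.find hex with hu
  obtain ⟨hu0, huIso⟩ : 0 < u ∧ D.IsoCl t N₁ u 0 := Nat.find_spec hex
  have humin : ∀ i, i < u → ¬(0 < i ∧ D.IsoCl t N₁ i 0) := fun i h => Nat.find_min hex h
  have hu1 : 1 < u := by
    rcases Nat.lt_or_ge 1 u with h | h
    · exact h
    · exfalso
      have hu1' : u = 1 := le_antisymm h hu0
      apply D.homog ht0 hirr hN₁ hper hN₁top
      have h0 := huIso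
      rw [hu1'] at h0
      exact h0
  have hudvd : u ∣ t := by
    by_contra hnd
    have hr0 : 0 < t % u := Nat.pos_of_ne_zero fun h => hnd (Nat.dvd_of_mod_eq_zero h)
    have hIr : D.IsoCl t N₁ (t % u) 0 := by
      apply IsoCl.sub_zero' D hN₁ (a := u * (t / u))
      · have h2 : u * (t / u) + t % u = t := Nat.div_add_mod t u
        have h4 : ∀ m, m = t → D.IsoCl t N₁ m 0 := fun m hm => by rw [hm]; exact IsoCl.t_zero D hper
        exact h4 _ h2
      · have h0 := IsoCl.mul_zero' D hN₁ huIso (t / u)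
        rwa [Nat.mul_comm] at h0
    exact humin (t % u) (Nat.mod_lt t hu0) ⟨hr0, hIr⟩
  set H : Submodule F V := Wseq (fun k => D.Aim (k * u) N₁) t with hH
  have hNileH : ∀ k, k < t → D.Aim (k * u) N₁ ≤ H := fun k hk => by
    rw [hH]; exact le_Wseq (fun k => D.Aim (k * u) N₁) hk
  have hN₁H : N₁ ≤ H := by
    have h0 := hNileH 0 ht0
    rwa [Nat.zero_mul, D.Aim_zero] at h0
  have hHne : H ≠ ⊥ := fun h => hN₁.1 (le_bot_iff.1 (h ▸ hN₁H))
  have hHst_t : D.St t H := St_Wseq fun l _ => st_Ni D hN₁ _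
  have hAimuH : D.Aim u H ≤ H := by
    rw [hH, Aim_Wseq]
    apply Wseq_le
    intro k hk
    rw [D.Aim_Aim]
    have he : u + k * u = (k + 1) * u := by ring
    rw [he]
    rcases Nat.lt_or_ge (k + 1) t with h | h
    · exact hNileH (k + 1) h
    · have hkt : k + 1 = t := le_antisymm (by omega) h
      rw [hkt]
      have h2 : D.Aim (t * u) N₁ = N₁ := by
        have h3 := Aim_mul_t D hper u
        rwa [Nat.mul_comm] at h3
      rw [h2]
      exact hN₁H
  have hHstu : D.St u H := D.St_iff_Aim_le.2 hAimuH
  have hHiE : ∀ i, D.Aim i H = Wseq (fun k => D.Aim (k * u + i) N₁) t := by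
    intro i
    rw [hH, Aim_Wseq]
    exact Wseq_congr fun l _ => by rw [D.Aim_Aim, Nat.add_comm]
  set WW := Wseq (fun i => D.Aim i H) u with hWW
  have hWWst : D.St 1 WW := by
    rw [D.St_iff_Aim_le, hWW, Aim_Wseq]
    apply Wseq_le
    intro i hi
    rw [D.Aim_Aim]
    rcases Nat.lt_or_ge (1 + i) u with h | h
    · have := le_Wseq (fun i => D.Aim i H) h
      exact this
    · have hiu : 1 + i = u := by omega
      rw [hiu]
      refine le_trans hAimuH ?_
      have h0 := le_Wseq (fun i => D.Aim i H) hu0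
      rwa [D.Aim_zero] at h0
  have hWWtop : WW = ⊤ := by
    rcases hirr WW hWWst with h | h
    · exfalso
      apply hHne
      have h0 : H ≤ WW := by
        have h1 := le_Wseq (fun i => D.Aim i H) hu0
        rw [hWW]
        rwa [D.Aim_zero] at h1
      exact le_bot_iff.1 (h ▸ h0)
    · exact h
  set Rest : ℕ → Submodule F V :=
    fun i => Wseq (fun j => if j = i then ⊥ else D.Aim j H) u with hRest
  have hind : ∀ i, i < u → (D.Aim i H) ⊓ Rest i = ⊥ := by
    intro i hiu
    by_contra hne
    have hKst : D.St t ((D.Aim i H) ⊓ Rest i) := by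
      apply St.inf D (St.Aim D hHst_t)
      apply St_Wseq
      intro j _
      by_cases h : j = i
      · rw [if_pos h]; exact St.bot D t
      · rw [if_neg h]; exact St.Aim D hHst_t
    obtain ⟨Z, hZle, hZ⟩ := D.simp_exists hne hKst
    have hZ1 : Z ≤ D.Aim i H := le_trans hZle inf_le_left
    have hZ2 : Z ≤ Rest i := le_trans hZle inf_le_right
    obtain ⟨k, hk, hMk⟩ : ∃ k < t, D.MIso t Z (D.Aim (k * u + i) N₁) := by
      have h0 : Z ≤ Wseq (fun k => D.Aim (k * u + i) N₁) t := by rw [← hHiE]; exact hZ1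
      exact D.star t _ (fun k _ => Or.inr (simp_Ni D hN₁ _)) Z hZ h0
    set Y : ℕ → Submodule F V := fun l => if l % u = i then ⊥ else D.Aim l N₁ with hY
    have hRestY : Rest i ≤ Wseq Y (u * t) := by
      apply Wseq_le
      intro j hju
      by_cases hji : j = i
      · rw [if_pos hji]; exact bot_le
      · rw [if_neg hji, hHiE j]
        apply Wseq_le
        intro k2 _
        have hlt : k2 * u + j < u * t := by
          have h1 : k2 * u + j < k2 * u + u := Nat.add_lt_add_left hju _
          have h2 : k2 * u + u = (k2 + 1) * u := by ring
          have h3 : (k2 + 1) * u ≤ t * u := Nat.mul_le_mul_right u (by omega)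
          have h4 : t * u = u * t := Nat.mul_comm t u
          omega
        have hmod : (k2 * u + j) % u = j := by
          rw [Nat.add_comm, Nat.add_mul_mod_self_right]
          exact Nat.mod_eq_of_lt hju
        have hYv : Y (k2 * u + j) = D.Aim (k2 * u + j) N₁ := by
          rw [hY]
          exact if_neg (by rw [hmod]; exact hji)
        rw [← hYv]
        exact le_Wseq Y hlt
    obtain ⟨l, hl, hMl⟩ : ∃ l < u * t, D.MIso t Z (Y l) := by
      apply D.star (u * t) Y ?_ Z hZ (le_trans hZ2 hRestY)
      intro l _
      by_cases h : l % u = i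
      · exact Or.inl (by rw [hY]; exact if_pos h)
      · refine Or.inr ?_
        have h0 : Y l = D.Aim l N₁ := by rw [hY]; exact if_neg h
        rw [h0]
        exact simp_Ni D hN₁ _
    have hYlne : Y l ≠ ⊥ := MIso.ne_bot D hZ.1 hMl
    have hlmod : l % u ≠ i := fun h => hYlne (by rw [hY]; exact if_pos h)
    have hYl : Y l = D.Aim l N₁ := by rw [hY]; exact if_neg hlmod
    rw [hYl] at hMl
    have hZst : D.St t Z := hZ.2.1
    have hIi : D.IsoCl t N₁ (k * u + i) i := by
      have h0 := IsoCl.mul_zero' D hN₁ huIso k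
      have h1 := IsoCl.shift' D hN₁ i h0
      rwa [Nat.zero_add] at h1
    have hIl : D.IsoCl t N₁ l (l % u) := by
      have h0 := IsoCl.mul_zero' D hN₁ huIso (l / u)
      have h1 := IsoCl.shift' D hN₁ (l % u) h0
      rw [Nat.zero_add] at h1
      have h2 : l / u * u + l % u = l := by
        rw [Nat.mul_comm]
        exact Nat.div_add_mod l u
      have h3 : ∀ m, m = l → D.IsoCl t N₁ m (l % u) → D.IsoCl t N₁ l (l % u) :=
        fun m hm hh => hm ▸ hh
      exact h3 _ h2 h1
    have hIkl : D.IsoCl t N₁ (k * u + i) l :=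
      MIso.trans D (st_Ni D hN₁ (k * u + i)) (MIso.symm D hZst hMk) hMl
    have hIij : D.IsoCl t N₁ i (l % u) :=
      IsoCl.trans' D hN₁ (IsoCl.symm' D hN₁ hIi) (IsoCl.trans' D hN₁ hIkl hIl)
    have hml : l % u < u := Nat.mod_lt l hu0
    rcases Nat.lt_trichotomy i (l % u) with hlt | heq | hgt
    · have h0 : D.IsoCl t N₁ (0 + i) ((l % u - i) + i) := by
        have he : (l % u - i) + i = l % u := by omega
        rw [Nat.zero_add, he]
        exact hIij
      have h1 := IsoCl.unshift' D hN₁ i h0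
      have h2 := IsoCl.symm' D hN₁ h1
      exact humin (l % u - i) (by omega) ⟨by omega, h2⟩
    · exact hlmod heq.symm
    · have h0 : D.IsoCl t N₁ ((i - l % u) + l % u) (0 + l % u) := by
        have he : (i - l % u) + l % u = i := by omega
        rw [Nat.zero_add, he]
        exact hIij
      have h1 := IsoCl.unshift' D hN₁ (l % u) h0
      exact humin (i - l % u) (by omega) ⟨by omega, h1⟩
  have hU : ∀ y : ℕ → V, (∀ i < u, y i ∈ D.Aim i H) →
      (∑ i ∈ Finset.range u, y i) = 0 → ∀ i < u, y i = 0 := by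
    intro y hy hsum i hiu
    have h1 : y i + ∑ j ∈ (Finset.range u).erase i, y j = 0 := by
      rw [Finset.add_sum_erase _ y (Finset.mem_range.2 hiu), hsum]
    have h2 : ∑ j ∈ (Finset.range u).erase i, y j ∈ Rest i := by
      apply Submodule.sum_mem
      intro j hj
      have hj1 : j < u := Finset.mem_range.1 (Finset.mem_of_mem_erase hj)
      have hj2 : j ≠ i := Finset.ne_of_mem_erase hj
      have hle : D.Aim j H ≤ Rest i := by
        have h3 := le_Wseq (fun j' => if j' = i then ⊥ else D.Aim j' H) hj1
        rw [hRest]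
        rwa [if_neg hj2] at h3
      exact hle (hy j hj1)
    have h3 : y i = -(∑ j ∈ (Finset.range u).erase i, y j) := eq_neg_of_add_eq_zero_left h1
    have h4 : y i ∈ (D.Aim i H) ⊓ Rest i :=
      ⟨hy i hiu, by rw [h3]; exact Submodule.neg_mem _ h2⟩
    rw [hind i hiu] at h4
    exact (Submodule.mem_bot F).1 h4
  have hfr : ∀ m, m ≤ u → finrank F (Wseq (fun i => D.Aim i H) m) = m * finrank F H := by
    intro m
    induction m with
    | zero =>
        intro _
        show finrank F (⊥ : Submodule F V) = 0 * finrank F H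
        rw [finrank_bot, Nat.zero_mul]
    | succ n ih =>
        intro hn
        have hdisj : (Wseq (fun i => D.Aim i H) n) ⊓ (D.Aim n H) = ⊥ := by
          rw [eq_bot_iff]
          intro x hx
          have hx1 : x ∈ D.Aim n H := hx.2
          have hx2 : x ∈ Rest n := by
            have hle : Wseq (fun i => D.Aim i H) n ≤ Rest n := by
              apply Wseq_le
              intro j hj
              have hj2 : j ≠ n := by omega
              have h3 := le_Wseq (fun j' => if j' = n then ⊥ else D.Aim j' H)
                (show j < u by omega)
              rw [hRest]
              rwa [if_neg hj2] at h3
            exact hle hx.1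
          have h0 : x ∈ (D.Aim n H) ⊓ Rest n := ⟨hx1, hx2⟩
          rw [hind n (by omega)] at h0
          exact h0
        have heq := Submodule.finrank_sup_add_finrank_inf_eq
          (Wseq (fun i => D.Aim i H) n) (D.Aim n H)
        rw [hdisj, finrank_bot, Nat.add_zero] at heq
        show finrank F ↥(Wseq (fun i => D.Aim i H) n ⊔ D.Aim n H) = (n + 1) * finrank F ↥H
        rw [heq, ih (by omega), D.finrank_Aim]
        ring
  have hdvdrank : u ∣ finrank F V := by
    have h0 := hfr u le_rfl
    rw [← hWW, hWWtop] at h0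
    rw [finrank_top] at h0
    exact Dvd.intro _ h0.symm
  refine ⟨u, hu1, Nat.dvd_gcd hudvd hdvdrank, H, hHstu, hHne, ?_, ?_⟩
  · -- minimality
    intro q hqle hqst
    by_cases hqbot : q = ⊥
    · exact Or.inl hqbot
    refine Or.inr ?_
    have hAimuq : D.Aim u q ≤ q := D.St_iff_Aim_le.1 hqst
    set Wq := Wseq (fun i => D.Aim i q) u with hWq
    have hWqst : D.St 1 Wq := by
      rw [D.St_iff_Aim_le, hWq, Aim_Wseq]
      apply Wseq_le
      intro i hi
      rw [D.Aim_Aim]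
      rcases Nat.lt_or_ge (1 + i) u with h | h
      · exact le_Wseq (fun i => D.Aim i q) h
      · have hiu : 1 + i = u := by omega
        rw [hiu]
        refine le_trans hAimuq ?_
        have h0 := le_Wseq (fun i => D.Aim i q) hu0
        rwa [D.Aim_zero] at h0
    have hqWq : q ≤ Wq := by
      have h0 := le_Wseq (fun i => D.Aim i q) hu0
      rw [hWq]
      rwa [D.Aim_zero] at h0
    have hWqne : Wq ≠ ⊥ := fun h => hqbot (le_bot_iff.1 (h ▸ hqWq))
    have hWqtop : Wq = ⊤ := by
      rcases hirr Wq hWqst with h | h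
      · exact absurd h hWqne
      · exact h
    apply le_antisymm hqle
    intro x hx
    have hxW : x ∈ Wq := by rw [hWqtop]; trivial
    obtain ⟨y, hy, hxsum⟩ := mem_Wseq.1 hxW
    set y' : ℕ → V := fun j => if j = 0 then y 0 - x else y j with hy'
    have hy'mem : ∀ i < u, y' i ∈ D.Aim i H := by
      intro i hiu
      by_cases h : i = 0
      · rw [hy']
        simp only [h, if_pos]
        have h1 : y 0 ∈ q := by
          have := hy 0 hu0
          rwa [D.Aim_zero] at this
        rw [D.Aim_zero]
        exact Submodule.sub_mem _ (hqle h1) hx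
      · rw [hy']
        simp only [if_neg h]
        exact D.Aim_mono hqle (hy i hiu)
    have hy'sum : ∑ i ∈ Finset.range u, y' i = 0 := by
      have h0 : (0 : ℕ) ∈ Finset.range u := Finset.mem_range.2 hu0
      rw [← Finset.add_sum_erase _ y' h0]
      have h1 : ∑ j ∈ (Finset.range u).erase 0, y' j
          = ∑ j ∈ (Finset.range u).erase 0, y j := by
        refine Finset.sum_congr rfl fun j hj => ?_
        rw [hy']
        exact if_neg (Finset.ne_of_mem_erase hj)
      rw [h1]
      have h2 : y' 0 = y 0 - x := by simp [hy']
      rw [h2]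
      have h3 : y 0 + ∑ j ∈ (Finset.range u).erase 0, y j = x := by
        rw [Finset.add_sum_erase _ y h0, ← hxsum]
      have h4 := congrArg (fun w => w - x) h3
      rw [sub_self] at h4
      rw [← h4]
      abel
    have h5 := hU y' hy'mem hy'sum 0 hu0
    have h6 : y 0 - x = 0 := by
      have h7 : y' 0 = y 0 - x := by simp [hy']
      rw [← h7, h5]
    have h7 : x = y 0 := (sub_eq_zero.1 h6).symm
    rw [h7]
    have h8 := hy 0 hu0
    rwa [D.Aim_zero] at h8
  · -- unique decomposition
    intro v
    have hvW : v ∈ WW := by rw [hWWtop]; trivial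
    obtain ⟨y, hy, hvsum⟩ := mem_Wseq.1 hvW
    have hchoice : ∀ i, i < u → ∃ n : V, n ∈ H ∧ D.Ai i n = y i := by
      intro i hiu
      obtain ⟨n, hn, hne⟩ := hy i hiu
      exact ⟨n, hn, hne⟩
    choose nn hnmem hneq using hchoice
    have hFinSum : ∀ w : ∀ j, j < u → V,
        (∑ i : Fin u, w (i : ℕ) i.2)
          = ∑ l ∈ Finset.range u, (if h : l < u then w l h else 0) := by
      intro w
      rw [← Fin.sum_univ_eq_sum_range (fun l => if h : l < u then w l h else 0) u]
      refine Finset.sum_congr rfl fun j _ => ?_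
      show w (j : ℕ) j.2 = if h : (j : ℕ) < u then w (j : ℕ) h else 0
      rw [dif_pos j.2]
    have hrep : v = ∑ i : Fin u, D.Ai (i : ℕ) (nn (i : ℕ) i.2) := by
      rw [hFinSum (fun j hj => D.Ai j (nn j hj)), hvsum]
      refine Finset.sum_congr rfl fun l hl => ?_
      have hlu : l < u := Finset.mem_range.1 hl
      rw [dif_pos hlu, hneq l hlu]
    refine ⟨fun i => ⟨nn (i : ℕ) i.2, hnmem (i : ℕ) i.2⟩, hrep, ?_⟩
    intro c' hc'
    have key := hU (fun l => if h : l < u then D.Ai l ((c' ⟨l, h⟩ : V) - nn l h) else 0)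
      ?_ ?_
    · funext i
      apply Subtype.ext
      have hk : (if h : (i : ℕ) < u
          then D.Ai (i : ℕ) ((c' ⟨(i : ℕ), h⟩ : V) - nn (i : ℕ) h) else 0) = 0 :=
        key (i : ℕ) i.2
      rw [dif_pos i.2] at hk
      have hk2 : D.Ai (i : ℕ) ((c' ⟨(i : ℕ), i.2⟩ : V) - nn (i : ℕ) i.2)
          = D.Ai (i : ℕ) 0 := by rw [hk, D.Ai_zero]
      have hk3 := D.Ai_injective (i : ℕ) hk2
      have hk4 : (c' ⟨(i : ℕ), i.2⟩ : V) = nn (i : ℕ) i.2 := by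
        have := sub_eq_zero.1 hk3
        exact this
      have hEta : (⟨(i : ℕ), i.2⟩ : Fin u) = i := rfl
      rw [hEta] at hk4
      exact hk4
    · intro l hl
      show (if h : l < u then D.Ai l ((c' ⟨l, h⟩ : V) - nn l h) else 0) ∈ D.Aim l H
      rw [dif_pos hl]
      exact D.Ai_mem_Aim (Submodule.sub_mem _ (c' ⟨l, hl⟩).2 (hnmem l hl))
    · show (∑ l ∈ Finset.range u,
          if h : l < u then D.Ai l ((c' ⟨l, h⟩ : V) - nn l h) else 0) = 0
      rw [← hFinSum (fun j hj => D.Ai j ((c' ⟨j, hj⟩ : V) - nn j hj))]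
      have hsplit : ∀ i : Fin u, D.Ai (i : ℕ) ((c' i : V) - nn (i : ℕ) i.2)
          = D.Ai (i : ℕ) (c' i : V) - D.Ai (i : ℕ) (nn (i : ℕ) i.2) :=
        fun i => D.Ai_sub _ _ _
      have hcongr : ∑ i : Fin u, D.Ai (i : ℕ) ((c' ⟨(i : ℕ), i.2⟩ : V) - nn (i : ℕ) i.2)
          = ∑ i : Fin u, (D.Ai (i : ℕ) (c' i : V) - D.Ai (i : ℕ) (nn (i : ℕ) i.2)) := by
        refine Finset.sum_congr rfl fun i _ => ?_
        have hEta : (⟨(i : ℕ), i.2⟩ : Fin u) = i := rfl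
        rw [hEta, hsplit]
      rw [hcongr, Finset.sum_sub_distrib, ← hc', ← hrep, sub_self]

end SLAut
end IndProof

/-- Let the fixed field `C` of `φ` be algebraically closed of characteristic 0, and
let `M = (V, A)` be an irreducible finite-dimensional `D`-module whose restriction
`M↓^1_t` to `D_t` (i.e. `(V, A^t)`) is reducible for some `t ≥ 1`.  Then there is a
divisor `s > 1` of `gcd(t, dim_F M)` and an irreducible `D_s`-module `N` with
`M ≅ D ⊗_{D_s} N`: concretely, an `A^s`-stable subspace `N` of `V`, irreducible as
a `D_s`-module, such that `V` is the internal direct sum `⊕_{i<s} A^i(N)` (every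
`v ∈ V` is uniquely `∑_{i<s} A^i(nᵢ)` with `nᵢ ∈ N`). -/
theorem irreducible_not_absolutely_irreducible_is_induced
    {F V : Type*} [Field F] [CharZero F]
    (φ : F ≃+* F) [IsAlgClosed (fixedSubfield φ)]
    [AddCommGroup V] [Module F V] [FiniteDimensional F V]
    (A : V ≃+ V) (hA : ∀ (f : F) (v : V), A (f • v) = φ f • A v)
    (hnt : Nontrivial V)
    (hirr : ∀ p : Submodule F V, DiffStab ⇑A p → p = ⊥ ∨ p = ⊤)
    (t : ℕ) (ht : 1 ≤ t)
    (p₀ : Submodule F V) (hp₀ : DiffStab ((⇑A)^[t]) p₀)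
    (hp₀bot : p₀ ≠ ⊥) (hp₀top : p₀ ≠ ⊤) :
    ∃ s : ℕ, 1 < s ∧ s ∣ Nat.gcd t (Module.finrank F V) ∧
      ∃ N : Submodule F V,
        DiffStab ((⇑A)^[s]) N ∧
        N ≠ ⊥ ∧ (∀ q ≤ N, DiffStab ((⇑A)^[s]) q → q = ⊥ ∨ q = N) ∧
        ∀ v : V, ∃! c : Fin s → N, v = ∑ i : Fin s, (⇑A)^[(i : ℕ)] (c i : V) := by
  classical
  have hirr' : ∀ p : Submodule F V, (IndProof.SLAut.mk φ A hA).St 1 p → p = ⊥ ∨ p = ⊤ := by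
    intro p hp
    apply hirr p
    intro x hx
    have h := hp x hx
    rwa [(IndProof.SLAut.mk φ A hA).Ai_one] at h
  exact (IndProof.SLAut.mk φ A hA).main hirr' t ht p₀ hp₀ hp₀bot hp₀top
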